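/- arXiv:2506.00797 — 3 statements merged into one kernel-verified Lean document; each statement's English description precedes it below -/
import Mathlib

section
/- Let {π^k} be a sequence of deterministic action-dependent policies generated by Algorithm AD-MPI, associated with an ADG G_d = (N, E_d), and assume the singleton-argmax assumption holds. Let V° : S → ℝ be the eventual constant value of the sequence {V^{π^k}} (which exists, since the sequence is monotone nondecreasing and the set of deterministic policies is finite), and let G_c = (N, E_c) be a CG of the function Q^{V°}. If N_d(i) = N_c(i^{[+]}) for every i ∈ N, then the policy sequence converges in finitely many terms: there exist K ∈ ℕ and a deterministic action-dependent policy π° with π^k_i = π°_i for all i ∈ N and all k ≥ K, and π° is globally optimal, i.e., V^{π°} = V° = V^*. -/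
/-- `N_c(S)`: the set of neighbors of a set `S` of vertices in an undirected graph,
excluding `S` itself. -/
def ncSet {n : ℕ} (Gc : SimpleGraph (Fin n)) (S : Set (Fin n)) : Set (Fin n) :=
  (⋃ j ∈ S, Gc.neighborSet j) \ S

/-- `G_c` is a coordination graph (CG) of `Q : S × A → ℝ`: there is a family of local
value functions `q i j`, one for each edge `(i,j) ∈ E_c` (with `i < j`, so each
undirected edge is counted once; the family vanishes off the edges), such that
`Q(s,a) = Σ_{(i,j)∈E_c} q i j (s, a_i, a_j)`. -/
def IsCG {n : ℕ} {St : Type*} {A : Fin n → Type*} (Gc : SimpleGraph (Fin n))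
    (Q : St → (∀ i, A i) → ℝ) : Prop :=
  ∃ q : (i : Fin n) → (j : Fin n) → St → A i → A j → ℝ,
    (∀ i j, ¬(i < j ∧ Gc.Adj i j) → ∀ s ai aj, q i j s ai aj = 0) ∧
    ∀ s a, Q s a = ∑ i, ∑ j, q i j s (a i) (a j)

/-- The one-step lookahead value `Q^V(s,a) = r(s,a) + γ Σ_{s'} P(s'|s,a) V(s')`. -/
def QV {n : ℕ} {St : Type*} [Fintype St] {A : Fin n → Type*}
    (P : St → (∀ i, A i) → St → ℝ) (r : St → (∀ i, A i) → ℝ) (γ : ℝ)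
    (V : St → ℝ) : St → (∀ i, A i) → ℝ :=
  fun s a => r s a + γ * ∑ s', P s a s' * V s'

/-- The joint action induced by a deterministic action-dependent policy `π`, with the
coordinates in `F` clamped to the values of `a'`: the agents outside `F` evaluate their
policies in increasing index order (well defined since `Ed j i → j < i`), each `π i`
conditioning on the actions of its in-neighbors `N_d(i) = {j | Ed j i}`. Taking
`F = ∅` yields the induced joint action `ā_π(s)`. -/
def indAct {n : ℕ} {St : Type*} {A : Fin n → Type*}
    (Ed : Fin n → Fin n → Prop) [DecidableRel Ed]
    (hEd : ∀ i j : Fin n, Ed j i → j < i)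
    (π : (i : Fin n) → St → ((j : {j : Fin n // Ed j i}) → A j.1) → A i)
    (F : Finset (Fin n)) (a' : ∀ i, A i) (s : St) : (i : Fin n) → A i
  | i =>
    if i ∈ F then a' i
    else π i s (fun j => indAct Ed hEd π F a' s j.1)
termination_by i => (i : ℕ)
decreasing_by exact hEd i j.1 j.2

/-- The full joint action built from clamped values `c` on `N_d(i)` and a value `ai`
for agent `i` (coordinates outside `N_d[i]` are filled arbitrarily; they are irrelevant
when this vector is used to clamp only the coordinates in `N_d[i]`). -/
noncomputable def cvec {n : ℕ} {A : Fin n → Type*} [∀ i, Nonempty (A i)]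
    (Ed : Fin n → Fin n → Prop) [DecidableRel Ed] (i : Fin n)
    (c : (j : {j : Fin n // Ed j i}) → A j.1) (ai : A i) : ∀ j, A j :=
  fun j =>
    if h : Ed j i then c ⟨j, h⟩
    else if h : j = i then cast (congrArg A h.symm) ai
    else Classical.arbitrary (A j)

/-- `(πseq, Vseq)` is an execution of Algorithm AD-MPI:
* policy evaluation: `Vseq k` is the value function `V^{π^k}`, i.e. the fixed point of
  `T_{π^k} V (s) = Q^V(s, ā_{π^k}(s))`;
* policy iteration: for each agent `i` (in increasing order), `πseq (k+1) i (s, c)`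
  maximizes `a_i ↦ Q^{V^{π^k}}(s, c, a_i, ā_{π^{k,i}_{-N_d[i]}}(s, c, a_i))`, where
  `π^{k,i}` uses the already-updated policies `π^{k+1}_j` for `j < i` and `π^k_j`
  otherwise, and the coordinates in `N_d[i]` are clamped to `(c, a_i)`. -/
noncomputable def ADMPI {n : ℕ} {St : Type*} [Fintype St] {A : Fin n → Type*}
    [∀ i, Fintype (A i)] [∀ i, Nonempty (A i)]
    (P : St → (∀ i, A i) → St → ℝ) (r : St → (∀ i, A i) → ℝ) (γ : ℝ)
    (Ed : Fin n → Fin n → Prop) [DecidableRel Ed]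
    (hEd : ∀ i j : Fin n, Ed j i → j < i)
    (πseq : ℕ → (i : Fin n) → St → ((j : {j : Fin n // Ed j i}) → A j.1) → A i)
    (Vseq : ℕ → St → ℝ) : Prop :=
  (∀ (k : ℕ) (s : St) (a' : ∀ i, A i),
      Vseq k s = QV P r γ (Vseq k) s (indAct Ed hEd (πseq k) ∅ a' s)) ∧
  (∀ (k : ℕ) (i : Fin n) (s : St) (c : (j : {j : Fin n // Ed j i}) → A j.1)
      (ai : A i),
      QV P r γ (Vseq k) s
        (indAct Ed hEd (fun j => if j < i then πseq (k+1) j else πseq k j)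
          (Finset.univ.filter fun j => Ed j i ∨ j = i) (cvec Ed i c ai) s)
      ≤ QV P r γ (Vseq k) s
        (indAct Ed hEd (fun j => if j < i then πseq (k+1) j else πseq k j)
          (Finset.univ.filter fun j => Ed j i ∨ j = i)
          (cvec Ed i c (πseq (k+1) i s c)) s))

/-- The singleton-argmax assumption for Algorithm AD-MPI: for all `k ≥ 1`, `i`, `s`,
and clamped neighbor actions `c`, the set
`argmax_{a_i} Q^{V^{π^k}}(s, c, a_i, ā_{π^{k,i}_{-N_d[i]}}(s, c, a_i))` is a
singleton. -/
noncomputable def SingletonArgmax {n : ℕ} {St : Type*} [Fintype St] {A : Fin n → Type*}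
    [∀ i, Fintype (A i)] [∀ i, Nonempty (A i)]
    (P : St → (∀ i, A i) → St → ℝ) (r : St → (∀ i, A i) → ℝ) (γ : ℝ)
    (Ed : Fin n → Fin n → Prop) [DecidableRel Ed]
    (hEd : ∀ i j : Fin n, Ed j i → j < i)
    (πseq : ℕ → (i : Fin n) → St → ((j : {j : Fin n // Ed j i}) → A j.1) → A i)
    (Vseq : ℕ → St → ℝ) : Prop :=
  ∀ k ≥ 1, ∀ (i : Fin n) (s : St) (c : (j : {j : Fin n // Ed j i}) → A j.1)
    (ai₁ ai₂ : A i),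
    (∀ b : A i,
      QV P r γ (Vseq k) s
        (indAct Ed hEd (fun j => if j < i then πseq (k+1) j else πseq k j)
          (Finset.univ.filter fun j => Ed j i ∨ j = i) (cvec Ed i c b) s)
      ≤ QV P r γ (Vseq k) s
        (indAct Ed hEd (fun j => if j < i then πseq (k+1) j else πseq k j)
          (Finset.univ.filter fun j => Ed j i ∨ j = i) (cvec Ed i c ai₁) s)) →
    (∀ b : A i,
      QV P r γ (Vseq k) s
        (indAct Ed hEd (fun j => if j < i then πseq (k+1) j else πseq k j)
          (Finset.univ.filter fun j => Ed j i ∨ j = i) (cvec Ed i c b) s)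
      ≤ QV P r γ (Vseq k) s
        (indAct Ed hEd (fun j => if j < i then πseq (k+1) j else πseq k j)
          (Finset.univ.filter fun j => Ed j i ∨ j = i) (cvec Ed i c ai₂) s)) →
    ai₁ = ai₂
set_option linter.unusedSectionVars false

section AuxIndAct
variable {n : ℕ} {St : Type*} {A : Fin n → Type*}
variable (Ed : Fin n → Fin n → Prop) [DecidableRel Ed] (hEd : ∀ i j : Fin n, Ed j i → j < i)

lemma indAct_unfold
    (π : (i : Fin n) → St → ((j : {j : Fin n // Ed j i}) → A j.1) → A i)
    (F : Finset (Fin n)) (a' : ∀ i, A i) (s : St) (i : Fin n) :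
    indAct Ed hEd π F a' s i =
      if i ∈ F then a' i else π i s (fun j => indAct Ed hEd π F a' s j.1) := by
  rw [indAct]

/-- Master comparison lemma for induced actions. -/
lemma indAct_master
    (π π' : (i : Fin n) → St → ((j : {j : Fin n // Ed j i}) → A j.1) → A i)
    (F F' : Finset (Fin n)) (a' a'' : ∀ i, A i) (s : St)
    (D : Set (Fin n))
    (hD : ∀ i, i ∈ D →
      (i ∈ F ∧ i ∈ F' ∧ a' i = a'' i) ∨
      (i ∉ F ∧ i ∉ F' ∧ π i = π' i ∧ ∀ j, Ed j i → j ∈ D) ∨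
      (i ∉ F ∧ i ∈ F' ∧ (∀ j, Ed j i → j ∈ D ∧ j ∈ F') ∧
        π i s (fun j => a'' j.1) = a'' i)) :
    ∀ i ∈ D, indAct Ed hEd π F a' s i = indAct Ed hEd π' F' a'' s i := by
  have main : ∀ m : ℕ, ∀ i : Fin n, (i : ℕ) < m → i ∈ D →
      indAct Ed hEd π F a' s i = indAct Ed hEd π' F' a'' s i := by
    intro m
    induction m with
    | zero => intro i hi; omega
    | succ m IH =>
      intro i him hiD
      rcases hD i hiD with ⟨h1, h2, h3⟩ | ⟨h1, h2, h3, h4⟩ | ⟨h1, h2, h3, h4⟩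
      · rw [indAct_unfold, indAct_unfold, if_pos h1, if_pos h2, h3]
      · rw [indAct_unfold, indAct_unfold, if_neg h1, if_neg h2, h3]
        congr 1
        funext j
        exact IH j.1 (by have := hEd i j.1 j.2; omega) (h4 j.1 j.2)
      · rw [indAct_unfold, indAct_unfold, if_neg h1, if_pos h2]
        rw [← h4]
        congr 1
        funext j
        have hj := h3 j.1 j.2
        rw [IH j.1 (by have := hEd i j.1 j.2; omega) hj.1, indAct_unfold, if_pos hj.2]
  exact fun i hi => main (i + 1) i (by omega) hi

end AuxIndAct

section Sums
variable {n : ℕ} {St : Type*} {A : Fin n → Type*} [∀ i, Fintype (A i)]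

/-- Tail sum of local q-functions over edges whose larger endpoint has index `≥ t`. -/
def Rfun (q : (i : Fin n) → (j : Fin n) → St → A i → A j → ℝ) (s : St) (t : ℕ)
    (a : ∀ i, A i) : ℝ :=
  ∑ u, ∑ v, if t ≤ v.val then q u v s (a u) (a v) else 0

/-- Head sum of local q-functions over edges whose larger endpoint has index `< t`. -/
def Lowfun (q : (i : Fin n) → (j : Fin n) → St → A i → A j → ℝ) (s : St) (t : ℕ)
    (a : ∀ i, A i) : ℝ :=
  ∑ u, ∑ v, if v.val < t then q u v s (a u) (a v) else 0

/-- The column sum of local q-functions of edges whose larger endpoint is `i`. -/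
def colfun (q : (i : Fin n) → (j : Fin n) → St → A i → A j → ℝ) (s : St) (i : Fin n)
    (a : ∀ i, A i) : ℝ :=
  ∑ u, q u i s (a u) (a i)

variable (q : (i : Fin n) → (j : Fin n) → St → A i → A j → ℝ) (s : St)

lemma Rfun_zero (a : ∀ i, A i) :
    Rfun q s 0 a = ∑ u, ∑ v, q u v s (a u) (a v) := by
  unfold Rfun
  apply Finset.sum_congr rfl; intro u _
  apply Finset.sum_congr rfl; intro v _
  rw [if_pos (Nat.zero_le _)]

lemma Rfun_top (a : ∀ i, A i) : Rfun q s n a = 0 := by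
  unfold Rfun
  rw [Finset.sum_eq_zero]
  intro u _
  rw [Finset.sum_eq_zero]
  intro v _
  rw [if_neg (by omega)]

lemma Rfun_split (t : ℕ) (a : ∀ i, A i) :
    Rfun q s 0 a = Lowfun q s t a + Rfun q s t a := by
  unfold Rfun Lowfun
  rw [← Finset.sum_add_distrib]
  apply Finset.sum_congr rfl; intro u _
  rw [← Finset.sum_add_distrib]
  apply Finset.sum_congr rfl; intro v _
  rw [if_pos (Nat.zero_le v.val)]
  split_ifs with h1 h2
  · exact absurd h2 (by omega)
  · ring
  · ring
  · exact absurd (by omega : t ≤ v.val) (by assumption)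

lemma Rfun_succ (t : ℕ) (ht : t < n) (a : ∀ i, A i) :
    Rfun q s t a = colfun q s ⟨t, ht⟩ a + Rfun q s (t + 1) a := by
  unfold Rfun colfun
  rw [← Finset.sum_add_distrib]
  apply Finset.sum_congr rfl
  intro u _
  have key : ∀ v : Fin n, (if t ≤ v.val then q u v s (a u) (a v) else 0) =
      (if v = ⟨t, ht⟩ then q u v s (a u) (a v) else 0) +
      (if t + 1 ≤ v.val then q u v s (a u) (a v) else 0) := by
    intro v
    by_cases hv : v = ⟨t, ht⟩
    · subst hv; simp
    · have hv' : v.val ≠ t := fun h => hv (Fin.ext h)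
      rw [if_neg hv]
      split_ifs with h1 h2 h2
      · ring
      · exact absurd (show v.val = t by omega) hv'
      · exact absurd h2 (by omega)
      · ring
  rw [Finset.sum_congr rfl (fun v _ => key v), Finset.sum_add_distrib,
    Finset.sum_ite_eq' Finset.univ (⟨t, ht⟩ : Fin n)
      (fun v => q u v s (a u) (a v)), if_pos (Finset.mem_univ _)]

lemma Rfun_congr (Gc : SimpleGraph (Fin n))
    (hq0 : ∀ i j, ¬(i < j ∧ Gc.Adj i j) → ∀ s ai aj, q i j s ai aj = 0)
    (t : ℕ) (a a' : ∀ i, A i)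
    (h : ∀ u : Fin n, (t ≤ u.val ∨ ∃ v : Fin n, t ≤ v.val ∧ Gc.Adj u v) →
      a u = a' u) :
    Rfun q s t a = Rfun q s t a' := by
  unfold Rfun
  apply Finset.sum_congr rfl; intro u _
  apply Finset.sum_congr rfl; intro v _
  by_cases htv : t ≤ v.val
  · rw [if_pos htv, if_pos htv]
    by_cases hadj : u < v ∧ Gc.Adj u v
    · rw [h u (Or.inr ⟨v, htv, hadj.2⟩), h v (Or.inl htv)]
    · rw [hq0 u v hadj, hq0 u v hadj]
  · rw [if_neg htv, if_neg htv]

lemma Lowfun_congr (Gc : SimpleGraph (Fin n))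
    (hq0 : ∀ i j, ¬(i < j ∧ Gc.Adj i j) → ∀ s ai aj, q i j s ai aj = 0)
    (t : ℕ) (a a' : ∀ i, A i)
    (h : ∀ u : Fin n, u.val < t → a u = a' u) :
    Lowfun q s t a = Lowfun q s t a' := by
  unfold Lowfun
  apply Finset.sum_congr rfl; intro u _
  apply Finset.sum_congr rfl; intro v _
  by_cases htv : v.val < t
  · rw [if_pos htv, if_pos htv]
    by_cases hadj : u < v ∧ Gc.Adj u v
    · rw [h u (by have := hadj.1; omega), h v htv]
    · rw [hq0 u v hadj, hq0 u v hadj]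
  · rw [if_neg htv, if_neg htv]

lemma colfun_congr (Gc : SimpleGraph (Fin n))
    (hq0 : ∀ i j, ¬(i < j ∧ Gc.Adj i j) → ∀ s ai aj, q i j s ai aj = 0)
    (i : Fin n) (a a' : ∀ i, A i)
    (h : ∀ u : Fin n, Gc.Adj u i ∧ u < i → a u = a' u) (hi : a i = a' i) :
    colfun q s i a = colfun q s i a' := by
  unfold colfun
  apply Finset.sum_congr rfl; intro u _
  by_cases hadj : u < i ∧ Gc.Adj u i
  · rw [h u ⟨hadj.2, hadj.1⟩, hi]
  · rw [hq0 u i hadj, hq0 u i hadj]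

end Sums

/-- relaxed convergence theorem: let `(πseq, Vseq)` be an execution of
Algorithm AD-MPI satisfying the singleton-argmax assumption, let `Vcirc` be the
eventual constant value of the sequence `V^{π^k}`, and let `G_c` be a CG of
`Q^{Vcirc}`. If `N_d(i) = N_c(i^{[+]})` for every `i`, then the policy sequence
converges in finitely many terms to a policy `π°` whose value function is `Vcirc`
(i.e. `Vcirc` is the fixed point of `T_{π°}`), and `π°` is globally optimal:
`V^{π°} = Vcirc = V^*`. -/
theorem stmt13 {n : ℕ} {St : Type*} [Fintype St] {A : Fin n → Type*}
    [∀ i, Fintype (A i)] [∀ i, Nonempty (A i)]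
    (P : St → (∀ i, A i) → St → ℝ) (r : St → (∀ i, A i) → ℝ) (γ : ℝ)
    (hP0 : ∀ s a s', 0 ≤ P s a s') (hP1 : ∀ s a, ∑ s', P s a s' = 1)
    (hγ0 : 0 ≤ γ) (hγ1 : γ < 1)
    (Ed : Fin n → Fin n → Prop) [DecidableRel Ed]
    (hEd : ∀ i j : Fin n, Ed j i → j < i)
    (πseq : ℕ → (i : Fin n) → St → ((j : {j : Fin n // Ed j i}) → A j.1) → A i)
    (Vseq : ℕ → St → ℝ)
    (hADMPI : ADMPI P r γ Ed hEd πseq Vseq)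
    (hSingle : SingletonArgmax P r γ Ed hEd πseq Vseq)
    (Vcirc : St → ℝ)
    (hVcirc : ∃ K₀ : ℕ, ∀ k ≥ K₀, ∀ s, Vseq k s = Vcirc s)
    (Gc : SimpleGraph (Fin n))
    (hCG : IsCG Gc (QV P r γ Vcirc))
    (hNd : ∀ k : Fin n, {j : Fin n | Ed j k} = ncSet Gc {j : Fin n | k ≤ j})
    (Vstar : St → ℝ)
    (hVstar : ∀ s, Vstar s = ⨆ a : ∀ i, A i, QV P r γ Vstar s a) :
    ∃ (K : ℕ)
      (πcirc : (i : Fin n) → St → ((j : {j : Fin n // Ed j i}) → A j.1) → A i),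
      (∀ k ≥ K, ∀ i : Fin n, πseq k i = πcirc i) ∧
      (∀ (s : St) (a' : ∀ i, A i),
        QV P r γ Vcirc s (indAct Ed hEd πcirc ∅ a' s) = Vcirc s) ∧
      (∀ s, Vcirc s = Vstar s) := by  classical
  obtain ⟨K₀, hK₀⟩ := hVcirc
  obtain ⟨q, hq0, hQ⟩ := hCG
  have hQVc : ∀ (V V' : St → ℝ), (∀ x, V x = V' x) → ∀ (s : St) (a : ∀ i, A i),
      QV P r γ V s a = QV P r γ V' s a := by
    intro V V' h s a
    unfold QV
    rw [Finset.sum_congr rfl fun s' _ => by rw [h s']]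
  have hEdIff : ∀ j i : Fin n, Ed j i ↔ (j < i ∧ ∃ m : Fin n, i ≤ m ∧ Gc.Adj j m) := by
    intro j i
    have h : j ∈ {j : Fin n | Ed j i} ↔ j ∈ ncSet Gc {m : Fin n | i ≤ m} := by
      rw [hNd i]
    simp only [Set.mem_setOf_eq, ncSet, Set.mem_diff, Set.mem_iUnion,
      SimpleGraph.mem_neighborSet, exists_prop] at h
    rw [h]
    constructor
    · rintro ⟨⟨m, him, hadj⟩, hji⟩
      exact ⟨lt_of_not_ge hji, m, him, hadj.symm⟩
    · rintro ⟨hji, m, him, hadj⟩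
      exact ⟨⟨m, him, hadj.symm⟩, not_le.mpr hji⟩
  have hclose : ∀ (i u m : Fin n), Ed m u → i ≤ u → Ed m i ∨ i ≤ m := by
    intro i u m hmu hiu
    by_cases him : i ≤ m
    · exact Or.inr him
    · obtain ⟨hlt, l, hl, hadj⟩ := (hEdIff m u).mp hmu
      exact Or.inl ((hEdIff m i).mpr ⟨lt_of_not_ge him, l, le_trans hiu hl, hadj⟩)
  have hnotEdself : ∀ i : Fin n, ¬ Ed i i := fun i h => absurd (hEd i i h) (lt_irrefl i)
  have hcvec_i : ∀ (i : Fin n) (c : (j : {j : Fin n // Ed j i}) → A j.1) (b : A i),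
      cvec Ed i c b i = b := by
    intro i c b
    unfold cvec
    rw [dif_neg (hnotEdself i), dif_pos rfl]
    exact cast_eq _ b
  have hcvec_Ed : ∀ (i : Fin n) (c : (j : {j : Fin n // Ed j i}) → A j.1) (b : A i)
      (j : Fin n) (h : Ed j i), cvec Ed i c b j = c ⟨j, h⟩ := by
    intro i c b j h
    unfold cvec
    rw [dif_pos h]
  have hmemF : ∀ (i u : Fin n),
      u ∈ (Finset.univ.filter fun j => Ed j i ∨ j = i) ↔ (Ed u i ∨ u = i) := by
    intro i u; simp
  -- Stabilization step
  have hstep : ∀ k, K₀ ≤ k → 1 ≤ k → ∀ i : Fin n,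
      (∀ j : Fin n, i < j → πseq (k+1) j = πseq k j) →
      πseq (k+1+1) i = πseq (k+1) i := by
    intro k hkK hk1 i hst
    funext s c
    -- low coordinates do not depend on the clamped value of agent i
    have hS2 : ∀ m (b b' : A i), ∀ u : Fin n, u.val < i.val →
        indAct Ed hEd (fun j => if j < i then πseq (m+1) j else πseq m j)
          (Finset.univ.filter fun j => Ed j i ∨ j = i) (cvec Ed i c b) s u =
        indAct Ed hEd (fun j => if j < i then πseq (m+1) j else πseq m j)
          (Finset.univ.filter fun j => Ed j i ∨ j = i) (cvec Ed i c b') s u := by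
      intro m b b' u hu
      refine indAct_master Ed hEd _ _ _ _ _ _ s {u : Fin n | u.val < i.val} ?_ u hu
      intro v hv
      simp only [Set.mem_setOf_eq] at hv
      by_cases hvF : Ed v i ∨ v = i
      · left
        have hEdvi : Ed v i := by
          rcases hvF with h | h
          · exact h
          · exact absurd hv (by rw [h]; simp)
        refine ⟨(hmemF i v).mpr hvF, (hmemF i v).mpr hvF, ?_⟩
        rw [hcvec_Ed i c b v hEdvi, hcvec_Ed i c b' v hEdvi]
      · right; left
        refine ⟨fun h => hvF ((hmemF i v).mp h), fun h => hvF ((hmemF i v).mp h), rfl, ?_⟩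
        intro j hj
        simp only [Set.mem_setOf_eq]
        exact lt_trans (hEd v j hj) hv
    -- coordinates in N_d(i) ∪ {u ≥ i} agree between rounds k and k+1
    have hS1 : ∀ (b : A i), ∀ u : Fin n, (Ed u i ∨ i ≤ u) →
        indAct Ed hEd (fun j => if j < i then πseq (k+1+1) j else πseq (k+1) j)
          (Finset.univ.filter fun j => Ed j i ∨ j = i) (cvec Ed i c b) s u =
        indAct Ed hEd (fun j => if j < i then πseq (k+1) j else πseq k j)
          (Finset.univ.filter fun j => Ed j i ∨ j = i) (cvec Ed i c b) s u := by
      intro b u hu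
      refine indAct_master Ed hEd _ _ _ _ _ _ s {u : Fin n | Ed u i ∨ i ≤ u} ?_ u hu
      intro v hv
      simp only [Set.mem_setOf_eq] at hv
      by_cases hvF : Ed v i ∨ v = i
      · exact Or.inl ⟨(hmemF i v).mpr hvF, (hmemF i v).mpr hvF, rfl⟩
      · right; left
        have hiv : i < v := by
          rcases hv with h | h
          · exact absurd h (fun h' => hvF (Or.inl h'))
          · exact lt_of_le_of_ne h (fun h' => hvF (Or.inr h'.symm))
        refine ⟨fun h => hvF ((hmemF i v).mp h), fun h => hvF ((hmemF i v).mp h), ?_, ?_⟩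
        · rw [if_neg (not_lt_of_gt hiv), if_neg (not_lt_of_gt hiv)]
          exact hst v hiv
        · intro j hj
          exact hclose i v j hj (le_of_lt hiv)
    -- expansion of the objective
    have hobj : ∀ m, K₀ ≤ m → ∀ (b : A i),
        QV P r γ (Vseq m) s
          (indAct Ed hEd (fun j => if j < i then πseq (m+1) j else πseq m j)
            (Finset.univ.filter fun j => Ed j i ∨ j = i) (cvec Ed i c b) s) =
        Lowfun q s i.val
          (indAct Ed hEd (fun j => if j < i then πseq (m+1) j else πseq m j)
            (Finset.univ.filter fun j => Ed j i ∨ j = i) (cvec Ed i c b) s) +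
        Rfun q s i.val
          (indAct Ed hEd (fun j => if j < i then πseq (m+1) j else πseq m j)
            (Finset.univ.filter fun j => Ed j i ∨ j = i) (cvec Ed i c b) s) := by
      intro m hm b
      rw [hQVc (Vseq m) Vcirc (hK₀ m hm) s _, hQ s _, ← Rfun_zero q s _,
        Rfun_split q s i.val _]
    have hLowConst : ∀ m (b b' : A i),
        Lowfun q s i.val
          (indAct Ed hEd (fun j => if j < i then πseq (m+1) j else πseq m j)
            (Finset.univ.filter fun j => Ed j i ∨ j = i) (cvec Ed i c b) s) =
        Lowfun q s i.val
          (indAct Ed hEd (fun j => if j < i then πseq (m+1) j else πseq m j)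
            (Finset.univ.filter fun j => Ed j i ∨ j = i) (cvec Ed i c b') s) := by
      intro m b b'
      exact Lowfun_congr q s Gc hq0 i.val _ _ (fun u hu => hS2 m b b' u hu)
    have hRsame : ∀ (b : A i),
        Rfun q s i.val
          (indAct Ed hEd (fun j => if j < i then πseq (k+1+1) j else πseq (k+1) j)
            (Finset.univ.filter fun j => Ed j i ∨ j = i) (cvec Ed i c b) s) =
        Rfun q s i.val
          (indAct Ed hEd (fun j => if j < i then πseq (k+1) j else πseq k j)
            (Finset.univ.filter fun j => Ed j i ∨ j = i) (cvec Ed i c b) s) := by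
      intro b
      refine Rfun_congr q s Gc hq0 i.val _ _ ?_
      intro u hu
      apply hS1 b u
      rcases hu with h | ⟨v, hv, hadj⟩
      · exact Or.inr (by rw [Fin.le_def]; exact h)
      · by_cases hiu : i ≤ u
        · exact Or.inr hiu
        · exact Or.inl ((hEdIff u i).mpr
            ⟨lt_of_not_ge hiu, v, by rw [Fin.le_def]; exact hv, hadj⟩)
    have h2 : ∀ (b : A i),
        QV P r γ (Vseq k) s
          (indAct Ed hEd (fun j => if j < i then πseq (k+1) j else πseq k j)
            (Finset.univ.filter fun j => Ed j i ∨ j = i) (cvec Ed i c b) s) ≤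
        QV P r γ (Vseq k) s
          (indAct Ed hEd (fun j => if j < i then πseq (k+1) j else πseq k j)
            (Finset.univ.filter fun j => Ed j i ∨ j = i)
            (cvec Ed i c (πseq (k+1+1) i s c)) s) := by
      intro b
      have e := hADMPI.2 (k+1) i s c b
      have g1 := hobj k hkK b
      have g2 := hobj k hkK (πseq (k+1+1) i s c)
      have g3 := hobj (k+1) (by omega) b
      have g4 := hobj (k+1) (by omega) (πseq (k+1+1) i s c)
      have l1 := hLowConst k b (πseq (k+1+1) i s c)
      have l2 := hLowConst (k+1) b (πseq (k+1+1) i s c)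
      have r1 := hRsame b
      have r2 := hRsame (πseq (k+1+1) i s c)
      linarith
    exact (hSingle k hk1 i s c (πseq (k+1) i s c) (πseq (k+1+1) i s c)
      (fun b => hADMPI.2 k i s c b) h2).symm
  -- stabilization by downward induction on the agent index
  have hstab : ∀ m : ℕ, ∀ i : Fin n, n - i.val = m → ∀ k, K₀ + 1 + m ≤ k →
      πseq (k+1) i = πseq k i := by
    intro m
    induction m using Nat.strong_induction_on with
    | _ m IH =>
      intro i him k hk
      have hin : i.val < n := i.isLt
      obtain ⟨k', rfl⟩ : ∃ k', k = k' + 1 := ⟨k - 1, by omega⟩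
      refine hstep k' (by omega) (by omega) i ?_
      intro j hij
      have hij' : i.val < j.val := hij
      exact IH (n - j.val) (by omega) j rfl k' (by omega)
  -- the limit policy
  have hconst : ∀ k, K₀ + n + 1 ≤ k → ∀ i : Fin n, πseq k i = πseq (K₀ + n + 1) i := by
    intro k hk
    induction k, hk using Nat.le_induction with
    | base => intro i; rfl
    | succ k hk IH =>
      intro i
      rw [hstab (n - i.val) i rfl k (by omega), IH i]
  set KK := K₀ + n + 1 with hKK
  -- value of the limit policy
  have heval : ∀ (s : St) (a' : ∀ i, A i),
      QV P r γ Vcirc s (indAct Ed hEd (πseq KK) ∅ a' s) = Vcirc s := by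
    intro s a'
    have h := hADMPI.1 KK s a'
    rw [hQVc (Vseq KK) Vcirc (hK₀ KK (by omega)) s _] at h
    rw [← h, hK₀ KK (by omega) s]
  -- converged improvement inequality
  have himpr : ∀ (i : Fin n) (s : St) (c : (j : {j : Fin n // Ed j i}) → A j.1)
      (b : A i),
      QV P r γ Vcirc s (indAct Ed hEd (πseq KK)
        (Finset.univ.filter fun j => Ed j i ∨ j = i) (cvec Ed i c b) s) ≤
      QV P r γ Vcirc s (indAct Ed hEd (πseq KK)
        (Finset.univ.filter fun j => Ed j i ∨ j = i)
        (cvec Ed i c (πseq KK i s c)) s) := by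
    intro i s c b
    have hmix : (fun j : Fin n => if j < i then πseq (KK+1) j else πseq KK j)
        = πseq KK := by
      funext j
      split_ifs with h
      · exact hconst (KK+1) (by omega) j
      · rfl
    have h := hADMPI.2 KK i s c b
    rw [hQVc (Vseq KK) Vcirc (hK₀ KK (by omega)) s _,
      hQVc (Vseq KK) Vcirc (hK₀ KK (by omega)) s _, hmix,
      hconst (KK+1) (by omega) i] at h
    exact h
  -- key optimality induction
  have hOPT : ∀ (s : St) (d t : ℕ), t + d = n → ∀ a : ∀ i, A i,
      Rfun q s t a ≤ Rfun q s t (indAct Ed hEd (πseq KK)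
        (Finset.univ.filter fun j : Fin n => j.val < t) a s) := by
    intro s d
    induction d with
    | zero =>
      intro t ht a
      have h0 : t = n := by omega
      subst h0
      rw [Rfun_top, Rfun_top]
    | succ d IH =>
      intro t ht a
      have htn : t < n := by omega
      set i : Fin n := ⟨t, htn⟩ with hi
      have hival : i.val = t := by rw [hi]
      set c : (j : {j : Fin n // Ed j i}) → A j.1 := fun j => a j.1 with hc
      -- O1 : clamped/greater coordinates of the improvement vector agree with
      -- the sequentially generated vector from the updated action profile
      have hO1 : ∀ (b : A i) (u : Fin n), (Ed u i ∨ i ≤ u) →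
          indAct Ed hEd (πseq KK)
            (Finset.univ.filter fun j => Ed j i ∨ j = i) (cvec Ed i c b) s u =
          indAct Ed hEd (πseq KK)
            (Finset.univ.filter fun j : Fin n => j.val < t + 1)
            (Function.update a i b) s u := by
        intro b u hu
        refine indAct_master Ed hEd _ _ _ _ _ _ s {u : Fin n | Ed u i ∨ i ≤ u} ?_ u hu
        intro v hv
        simp only [Set.mem_setOf_eq] at hv
        by_cases hvE : Ed v i
        · left
          have hvi : v < i := hEd i v hvE
          refine ⟨(hmemF i v).mpr (Or.inl hvE), ?_, ?_⟩
          · simp only [Finset.mem_filter, Finset.mem_univ, true_and]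
            have := Fin.lt_def.mp hvi
            omega
          · rw [hcvec_Ed i c b v hvE, Function.update_of_ne (ne_of_lt hvi)]
        · by_cases hvi : v = i
          · left
            subst hvi
            refine ⟨(hmemF i i).mpr (Or.inr rfl), ?_, ?_⟩
            · simp only [Finset.mem_filter, Finset.mem_univ, true_and]
              omega
            · rw [hcvec_i i c b, Function.update_self]
          · have hiv : i < v := by
              rcases hv with h | h
              · exact absurd h hvE
              · exact lt_of_le_of_ne h (fun h' => hvi h'.symm)
            right; left
            refine ⟨?_, ?_, rfl, fun j hj => hclose i v j hj (le_of_lt hiv)⟩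
            · intro h
              rcases (hmemF i v).mp h with h' | h'
              · exact hvE h'
              · exact hvi h'
            · simp only [Finset.mem_filter, Finset.mem_univ, true_and]
              have := Fin.lt_def.mp hiv
              omega
      -- O3 : the sequentially generated vector from `a` at level `t` equals the one
      -- from the updated profile at level `t+1`
      have hO3 : ∀ u : Fin n,
          indAct Ed hEd (πseq KK)
            (Finset.univ.filter fun j : Fin n => j.val < t) a s u =
          indAct Ed hEd (πseq KK)
            (Finset.univ.filter fun j : Fin n => j.val < t + 1)
            (Function.update a i (πseq KK i s c)) s u := by
        intro u
        refine indAct_master Ed hEd _ _ _ _ _ _ s Set.univ ?_ u (Set.mem_univ u)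
        intro v _
        by_cases hv1 : v.val < t
        · left
          refine ⟨?_, ?_, ?_⟩
          · simp only [Finset.mem_filter, Finset.mem_univ, true_and]; omega
          · simp only [Finset.mem_filter, Finset.mem_univ, true_and]; omega
          · rw [Function.update_of_ne (fun h => by rw [h] at hv1; omega)]
        · by_cases hv2 : v = i
          · right; right
            subst hv2
            refine ⟨?_, ?_, ?_, ?_⟩
            · simp only [Finset.mem_filter, Finset.mem_univ, true_and]; omega
            · simp only [Finset.mem_filter, Finset.mem_univ, true_and]; omega
            · intro j hj
              have hjv := Fin.lt_def.mp (hEd i j hj)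
              refine ⟨Set.mem_univ j, ?_⟩
              simp only [Finset.mem_filter, Finset.mem_univ, true_and]
              omega
            · have hfun : (fun j : {j : Fin n // Ed j i} =>
                  Function.update a i (πseq KK i s c) j.1) = c := by
                funext j
                rw [hc, Function.update_of_ne (ne_of_lt (hEd i j.1 j.2))]
              rw [hfun, Function.update_self]
          · right; left
            have hvt : ¬ v.val < t + 1 := by
              intro h
              exact hv2 (Fin.ext (by omega))
            refine ⟨?_, ?_, rfl, fun j hj => Set.mem_univ j⟩
            · simp only [Finset.mem_filter, Finset.mem_univ, true_and]; omega
            · simp only [Finset.mem_filter, Finset.mem_univ, true_and]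
              omega
      -- clamped values of the improvement vector
      have hwF : ∀ (b : A i) (u : Fin n), (Ed u i ∨ u = i) →
          indAct Ed hEd (πseq KK)
            (Finset.univ.filter fun j => Ed j i ∨ j = i) (cvec Ed i c b) s u
            = cvec Ed i c b u := by
        intro b u hu
        rw [indAct_unfold, if_pos ((hmemF i u).mpr hu)]
      have hBclamp : ∀ (x : ∀ j, A j) (u : Fin n), u.val < t + 1 →
          indAct Ed hEd (πseq KK)
            (Finset.univ.filter fun j : Fin n => j.val < t + 1) x s u = x u := by
        intro x u hu
        rw [indAct_unfold, if_pos (by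
          simp only [Finset.mem_filter, Finset.mem_univ, true_and]; exact hu)]
      -- expansion of the objective
      have hexp : ∀ x : ∀ j, A j, QV P r γ Vcirc s x =
          Lowfun q s t x + (colfun q s i x + Rfun q s (t+1) x) := by
        intro x
        rw [hQ s x, ← Rfun_zero q s x, Rfun_split q s t x]
        congr 1
        rw [hi]
        exact Rfun_succ q s t htn x
      have himp := himpr i s c (a i)
      rw [hexp, hexp] at himp
      -- the Lowfun parts agree
      have hLw : Lowfun q s t (indAct Ed hEd (πseq KK)
            (Finset.univ.filter fun j => Ed j i ∨ j = i) (cvec Ed i c (a i)) s)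
          = Lowfun q s t (indAct Ed hEd (πseq KK)
            (Finset.univ.filter fun j => Ed j i ∨ j = i)
            (cvec Ed i c (πseq KK i s c)) s) := by
        refine Lowfun_congr q s Gc hq0 t _ _ ?_
        intro u hu
        refine indAct_master Ed hEd _ _ _ _ _ _ s {u : Fin n | u.val < t} ?_ u hu
        intro v hv
        simp only [Set.mem_setOf_eq] at hv
        by_cases hvF : Ed v i ∨ v = i
        · left
          have hEdvi : Ed v i := by
            rcases hvF with h | h
            · exact h
            · exact absurd hv (by rw [h]; omega)
          refine ⟨(hmemF i v).mpr hvF, (hmemF i v).mpr hvF, ?_⟩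
          rw [hcvec_Ed i c _ v hEdvi, hcvec_Ed i c _ v hEdvi]
        · right; left
          refine ⟨fun h => hvF ((hmemF i v).mp h), fun h => hvF ((hmemF i v).mp h),
            rfl, ?_⟩
          intro j hj
          simp only [Set.mem_setOf_eq]
          have := Fin.lt_def.mp (hEd v j hj)
          omega
      -- the column parts
      have hcolw : ∀ b : A i, colfun q s i (indAct Ed hEd (πseq KK)
            (Finset.univ.filter fun j => Ed j i ∨ j = i) (cvec Ed i c b) s)
          = colfun q s i (Function.update a i b) := by
        intro b
        refine colfun_congr q s Gc hq0 i _ _ ?_ ?_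
        · intro u hu
          have hEdu : Ed u i := (hEdIff u i).mpr ⟨hu.2, i, le_refl i, hu.1⟩
          rw [hwF b u (Or.inl hEdu), hcvec_Ed i c b u hEdu,
            Function.update_of_ne (ne_of_lt hu.2)]
        · rw [hwF b i (Or.inr rfl), hcvec_i i c b, Function.update_self]
      -- the tail parts
      have hRw : ∀ b : A i, Rfun q s (t+1) (indAct Ed hEd (πseq KK)
            (Finset.univ.filter fun j => Ed j i ∨ j = i) (cvec Ed i c b) s)
          = Rfun q s (t+1) (indAct Ed hEd (πseq KK)
            (Finset.univ.filter fun j : Fin n => j.val < t + 1)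
            (Function.update a i b) s) := by
        intro b
        refine Rfun_congr q s Gc hq0 (t+1) _ _ ?_
        intro u hu
        apply hO1 b u
        rcases hu with h | ⟨v, hv, hadj⟩
        · right; rw [Fin.le_def]; omega
        · by_cases hiu : i ≤ u
          · exact Or.inr hiu
          · exact Or.inl ((hEdIff u i).mpr ⟨lt_of_not_ge hiu, v,
              by rw [Fin.le_def]; omega, hadj⟩)
      have hBt : indAct Ed hEd (πseq KK)
            (Finset.univ.filter fun j : Fin n => j.val < t) a s
          = indAct Ed hEd (πseq KK)
            (Finset.univ.filter fun j : Fin n => j.val < t + 1)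
            (Function.update a i (πseq KK i s c)) s := funext hO3
      have hcolB : colfun q s i (indAct Ed hEd (πseq KK)
            (Finset.univ.filter fun j : Fin n => j.val < t + 1)
            (Function.update a i (πseq KK i s c)) s)
          = colfun q s i (Function.update a i (πseq KK i s c)) := by
        refine colfun_congr q s Gc hq0 i _ _ ?_ ?_
        · intro u hu
          exact hBclamp _ u (by have := Fin.lt_def.mp hu.2; omega)
        · exact hBclamp _ i (by omega)
      have hupd : Function.update a i (a i) = a := Function.update_eq_self i a
      have hA2 := IH (t+1) (by omega) a
      have hsplit : ∀ x : ∀ j, A j,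
          Rfun q s t x = colfun q s i x + Rfun q s (t+1) x := by
        intro x; rw [hi]; exact Rfun_succ q s t htn x
      rw [hsplit a, hsplit (indAct Ed hEd (πseq KK)
        (Finset.univ.filter fun j : Fin n => j.val < t) a s), hBt, hcolB]
      have h1 := hcolw (a i)
      have h2 := hcolw (πseq KK i s c)
      have h3 := hRw (a i)
      have h4 := hRw (πseq KK i s c)
      rw [hupd] at h1 h3
      linarith
  -- upper bound: every action is dominated by the limit policy's action
  have hub : ∀ (s : St) (a : ∀ i, A i), QV P r γ Vcirc s a ≤ Vcirc s := by
    intro s a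
    have hB0 : (Finset.univ.filter fun j : Fin n => j.val < 0) = (∅ : Finset (Fin n)) := by
      apply Finset.filter_false_of_mem
      intro x _
      omega
    have h := hOPT s n 0 (by omega) a
    rw [hB0] at h
    have e1 : QV P r γ Vcirc s a = Rfun q s 0 a := by rw [hQ s a, Rfun_zero]
    have e2 : QV P r γ Vcirc s (indAct Ed hEd (πseq KK) ∅ a s)
        = Rfun q s 0 (indAct Ed hEd (πseq KK) ∅ a s) := by rw [hQ, Rfun_zero]
    rw [e1, ← heval s a, e2]
    exact h
  -- Bellman optimality of Vcirc
  have hBell : ∀ s, Vcirc s = ⨆ a : ∀ i, A i, QV P r γ Vcirc s a := by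
    intro s
    apply le_antisymm
    · rw [← heval s (Classical.arbitrary _)]
      exact le_ciSup (Set.Finite.bddAbove (Set.finite_range _)) _
    · exact ciSup_le (fun a => hub s a)
  -- uniqueness of the fixed point of the Bellman optimality operator
  have hfinal : ∀ s, Vcirc s = Vstar s := by
    rcases isEmpty_or_nonempty St with hSt | hSt
    · intro s; exact (IsEmpty.false s).elim
    · obtain ⟨s₀, -, hs₀⟩ := Finset.exists_max_image (Finset.univ : Finset St)
        (fun x => |Vcirc x - Vstar x|) ⟨Classical.arbitrary St, Finset.mem_univ _⟩
      have hQb : ∀ (s : St) (a : ∀ i, A i),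
          |QV P r γ Vcirc s a - QV P r γ Vstar s a| ≤ γ * |Vcirc s₀ - Vstar s₀| := by
        intro s a
        have e : QV P r γ Vcirc s a - QV P r γ Vstar s a
            = γ * ∑ s', P s a s' * (Vcirc s' - Vstar s') := by
          unfold QV
          have e2 : ∑ s', P s a s' * (Vcirc s' - Vstar s')
              = ∑ s', P s a s' * Vcirc s' - ∑ s', P s a s' * Vstar s' := by
            rw [← Finset.sum_sub_distrib]
            exact Finset.sum_congr rfl fun x _ => by ring
          rw [e2]
          ring
        rw [e, abs_mul, abs_of_nonneg hγ0]
        apply mul_le_mul_of_nonneg_left ?_ hγ0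
        calc |∑ s', P s a s' * (Vcirc s' - Vstar s')|
            ≤ ∑ s', |P s a s' * (Vcirc s' - Vstar s')| :=
              Finset.abs_sum_le_sum_abs _ _
          _ ≤ ∑ s', P s a s' * |Vcirc s₀ - Vstar s₀| := by
              apply Finset.sum_le_sum
              intro x _
              rw [abs_mul, abs_of_nonneg (hP0 s a x)]
              exact mul_le_mul_of_nonneg_left (hs₀ x (Finset.mem_univ x)) (hP0 s a x)
          _ = |Vcirc s₀ - Vstar s₀| := by
              rw [← Finset.sum_mul, hP1 s a, one_mul]
      have hbdd : ∀ (V : St → ℝ) (s : St),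
          BddAbove (Set.range fun a : ∀ i, A i => QV P r γ V s a) :=
        fun V s => Set.Finite.bddAbove (Set.finite_range _)
      have hd : ∀ s, |Vcirc s - Vstar s| ≤ γ * |Vcirc s₀ - Vstar s₀| := by
        intro s
        rw [hBell s, hVstar s, abs_sub_le_iff]
        constructor
        · rw [sub_le_iff_le_add]
          apply ciSup_le
          intro a
          have h1 := (abs_sub_le_iff.mp (hQb s a)).1
          calc QV P r γ Vcirc s a
              ≤ QV P r γ Vstar s a + γ * |Vcirc s₀ - Vstar s₀| := by linarith
            _ ≤ (⨆ a, QV P r γ Vstar s a) + γ * |Vcirc s₀ - Vstar s₀| :=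
                add_le_add_left (le_ciSup (hbdd Vstar s) a) _
            _ = γ * |Vcirc s₀ - Vstar s₀| + ⨆ a, QV P r γ Vstar s a := add_comm _ _
        · rw [sub_le_iff_le_add]
          apply ciSup_le
          intro a
          have h1 := (abs_sub_le_iff.mp (hQb s a)).2
          calc QV P r γ Vstar s a
              ≤ QV P r γ Vcirc s a + γ * |Vcirc s₀ - Vstar s₀| := by linarith
            _ ≤ (⨆ a, QV P r γ Vcirc s a) + γ * |Vcirc s₀ - Vstar s₀| :=
                add_le_add_left (le_ciSup (hbdd Vcirc s) a) _
            _ = γ * |Vcirc s₀ - Vstar s₀| + ⨆ a, QV P r γ Vcirc s a := add_comm _ _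
      have hM := hd s₀
      have hM0 : (0:ℝ) ≤ |Vcirc s₀ - Vstar s₀| := abs_nonneg _
      have hMz : |Vcirc s₀ - Vstar s₀| ≤ 0 := by nlinarith
      intro s
      have h1 : |Vcirc s - Vstar s| ≤ 0 := le_trans (hs₀ s (Finset.mem_univ s)) hMz
      have h2 : Vcirc s - Vstar s = 0 :=
        abs_eq_zero.mp (le_antisymm h1 (abs_nonneg _))
      linarith
  exact ⟨KK, πseq KK, fun k hk i => hconst k hk i, heval, hfinal⟩
end

section
/- Suppose G_c = (N, E_c) is a CG of Q^{V^π} for every joint policy π of a finite Markov game, and assume the singleton-argmax assumption holds. Let {π^k} be a sequence of deterministic action-dependent policies generated by Algorithm AD-MPI, associated with an ADG G_d = (N, E_d). If N_d(i) = N_c(i^{[+]}) for every i ∈ N, then {π^k} converges in finitely many terms to a globally optimal policy: there exist K ∈ ℕ and a deterministic action-dependent policy π° with π^k_i = π°_i for all i ∈ N and k ≥ K, and V^{π°} = V^*. -/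
lemma indAct_apply {n : ℕ} {St : Type*} {A : Fin n → Type*}
    (Ed : Fin n → Fin n → Prop) [DecidableRel Ed]
    (hEd : ∀ i j : Fin n, Ed j i → j < i)
    (π : (i : Fin n) → St → ((j : {j : Fin n // Ed j i}) → A j.1) → A i)
    (F : Finset (Fin n)) (a' : ∀ i, A i) (s : St) (i : Fin n) :
    indAct Ed hEd π F a' s i =
      if i ∈ F then a' i
      else π i s (fun j => indAct Ed hEd π F a' s j.1) := by
  rw [indAct]

lemma cvec_self {n : ℕ} {A : Fin n → Type*} [∀ i, Nonempty (A i)]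
    (Ed : Fin n → Fin n → Prop) [DecidableRel Ed]
    (hEd : ∀ i j : Fin n, Ed j i → j < i) (i : Fin n)
    (c : (j : {j : Fin n // Ed j i}) → A j.1) (ai : A i) :
    cvec Ed i c ai i = ai := by
  have hni : ¬ Ed i i := fun h => absurd (hEd i i h) (lt_irrefl i)
  simp only [cvec]
  rw [dif_neg hni, dif_pos trivial]
  exact eq_of_heq (cast_heq _ _)

lemma cvec_parent {n : ℕ} {A : Fin n → Type*} [∀ i, Nonempty (A i)]
    (Ed : Fin n → Fin n → Prop) [DecidableRel Ed] (i : Fin n)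
    (c : (j : {j : Fin n // Ed j i}) → A j.1) (ai : A i) (j : Fin n) (h : Ed j i) :
    cvec Ed i c ai j = c ⟨j, h⟩ := by
  simp only [cvec, dif_pos h]
/-- Master agreement lemma for rollouts. -/
lemma indAct_agree {n : ℕ} {St : Type*} {A : Fin n → Type*}
    (Ed : Fin n → Fin n → Prop) [DecidableRel Ed]
    (hEd : ∀ i j : Fin n, Ed j i → j < i)
    (π1 π2 : (i : Fin n) → St → ((j : {j : Fin n // Ed j i}) → A j.1) → A i)
    (F1 F2 : Finset (Fin n)) (v1 v2 : ∀ i, A i) (s : St)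
    (Sset : Fin n → Prop)
    (hclose : ∀ j, Sset j → j ∉ F1 → ∀ m, Ed m j → Sset m)
    (hF : ∀ j, Sset j → (j ∈ F1 ↔ j ∈ F2))
    (hv : ∀ j, Sset j → j ∈ F1 → v1 j = v2 j)
    (hπ : ∀ j, Sset j → j ∉ F1 → π1 j = π2 j) :
    ∀ j, Sset j → indAct Ed hEd π1 F1 v1 s j = indAct Ed hEd π2 F2 v2 s j := by
  suffices H : ∀ N (j : Fin n), (j : ℕ) < N → Sset j →
      indAct Ed hEd π1 F1 v1 s j = indAct Ed hEd π2 F2 v2 s j by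
    intro j hS; exact H ((j : ℕ) + 1) j (Nat.lt_succ_self _) hS
  intro N
  induction N with
  | zero => intro j hj; omega
  | succ N ih =>
    intro j hj hS
    rw [indAct, indAct]
    by_cases hmem : j ∈ F1
    · rw [if_pos hmem, if_pos ((hF j hS).mp hmem)]
      exact hv j hS hmem
    · rw [if_neg hmem, if_neg (fun h => hmem ((hF j hS).mpr h)), hπ j hS hmem]
      congr 1
      funext m
      exact ih m.1 (by have := hEd j m.1 m.2; omega)
        (hclose j hS hmem m.1 m.2)

/-- Clamping a coordinate set to the values of the unclamped rollout yields the
unclamped rollout. -/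
lemma indAct_erase {n : ℕ} {St : Type*} {A : Fin n → Type*}
    (Ed : Fin n → Fin n → Prop) [DecidableRel Ed]
    (hEd : ∀ i j : Fin n, Ed j i → j < i)
    (π : (i : Fin n) → St → ((j : {j : Fin n // Ed j i}) → A j.1) → A i)
    (F : Finset (Fin n)) (v a' : ∀ i, A i) (s : St)
    (hv : ∀ j ∈ F, v j = indAct Ed hEd π ∅ a' s j) :
    ∀ j, indAct Ed hEd π F v s j = indAct Ed hEd π ∅ a' s j := by
  suffices H : ∀ N (j : Fin n), (j : ℕ) < N →
      indAct Ed hEd π F v s j = indAct Ed hEd π ∅ a' s j by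
    intro j; exact H ((j : ℕ) + 1) j (Nat.lt_succ_self _)
  intro N
  induction N with
  | zero => intro j hj; omega
  | succ N ih =>
    intro j hj
    by_cases hmem : j ∈ F
    · rw [indAct, if_pos hmem]
      exact hv j hmem
    · rw [indAct, if_neg hmem]
      conv_rhs => rw [indAct, if_neg (Finset.notMem_empty j)]
      congr 1
      funext m
      exact ih m.1 (by have := hEd j m.1 m.2; omega)

/-- Extending the clamp set by one coordinate, clamped to the value the rollout
would choose, does not change the rollout. -/
lemma indAct_insert {n : ℕ} {St : Type*} {A : Fin n → Type*} [DecidableEq (Fin n)]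
    (Ed : Fin n → Fin n → Prop) [DecidableRel Ed]
    (hEd : ∀ i j : Fin n, Ed j i → j < i)
    (π : (i : Fin n) → St → ((j : {j : Fin n // Ed j i}) → A j.1) → A i)
    (F : Finset (Fin n)) (v : ∀ i, A i) (s : St) (j₀ : Fin n) (hj₀ : j₀ ∉ F) :
    ∀ j, indAct Ed hEd π (insert j₀ F)
        (Function.update v j₀ (indAct Ed hEd π F v s j₀)) s j
      = indAct Ed hEd π F v s j := by
  suffices H : ∀ N (j : Fin n), (j : ℕ) < N →
      indAct Ed hEd π (insert j₀ F)
        (Function.update v j₀ (indAct Ed hEd π F v s j₀)) s j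
      = indAct Ed hEd π F v s j by
    intro j; exact H ((j : ℕ) + 1) j (Nat.lt_succ_self _)
  intro N
  induction N with
  | zero => intro j hj; omega
  | succ N ih =>
    intro j hj
    by_cases hj0 : j = j₀
    · subst hj0
      rw [indAct, if_pos (Finset.mem_insert_self _ _), Function.update_self]
    · by_cases hmem : j ∈ F
      · rw [indAct, if_pos (Finset.mem_insert_of_mem hmem),
          Function.update_of_ne hj0]
        conv_rhs => rw [indAct, if_pos hmem]
      · have : j ∉ insert j₀ F := by
          simp [Finset.mem_insert, hj0, hmem]
        rw [indAct, if_neg this]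
        conv_rhs => rw [indAct, if_neg hmem]
        congr 1
        funext m
        exact ih m.1 (by have := hEd j m.1 m.2; omega)
/-- Difference-transfer lemma from the coordination-graph decomposition. -/
lemma DTlem {n : ℕ} {St : Type*} {A : Fin n → Type*} [∀ i, Fintype (A i)]
    (Gc : SimpleGraph (Fin n))
    (q : (i : Fin n) → (j : Fin n) → St → A i → A j → ℝ)
    (hq0 : ∀ i j, ¬(i < j ∧ Gc.Adj i j) → ∀ s ai aj, q i j s ai aj = 0)
    (Ed : Fin n → Fin n → Prop)
    (hE2 : ∀ (i u v : Fin n), u < i → i ≤ v → Gc.Adj u v → Ed u i)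
    (i : Fin n) (s : St) (x x' z z' : ∀ j, A j)
    (hxx' : ∀ j, j < i → x j = x' j) (hzz' : ∀ j, j < i → z j = z' j)
    (hxz : ∀ j, Ed j i ∨ i ≤ j → x j = z j)
    (hx'z' : ∀ j, Ed j i ∨ i ≤ j → x' j = z' j) :
    (∑ u, ∑ v, q u v s (x u) (x v)) - (∑ u, ∑ v, q u v s (x' u) (x' v))
      = (∑ u, ∑ v, q u v s (z u) (z v)) - (∑ u, ∑ v, q u v s (z' u) (z' v)) := by
  classical
  set L : (∀ j, A j) → ℝ :=
    fun w => ∑ u, ∑ v ∈ Finset.univ.filter (fun v => v < i), q u v s (w u) (w v)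
    with hL
  set H : (∀ j, A j) → ℝ :=
    fun w => ∑ u, ∑ v ∈ Finset.univ.filter (fun v => ¬ v < i), q u v s (w u) (w v)
    with hH
  have hsplit : ∀ w : ∀ j, A j, (∑ u, ∑ v, q u v s (w u) (w v)) = L w + H w := by
    intro w
    rw [hL, hH, ← Finset.sum_add_distrib]
    refine Finset.sum_congr rfl fun u _ => ?_
    exact (Finset.sum_filter_add_sum_filter_not _ _ _).symm
  -- low sums agree for actions agreeing below i
  have hlow : ∀ w w' : ∀ j, A j, (∀ j, j < i → w j = w' j) → L w = L w' := by
    intro w w' hww'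
    refine Finset.sum_congr rfl fun u _ => Finset.sum_congr rfl fun v hv => ?_
    rw [Finset.mem_filter] at hv
    by_cases h : u < v ∧ Gc.Adj u v
    · rw [hww' u (lt_trans h.1 hv.2), hww' v hv.2]
    · rw [hq0 u v h, hq0 u v h]
  -- high sums agree for actions agreeing on N_d(i) ∪ {≥ i}
  have hhigh : ∀ w w' : ∀ j, A j, (∀ j, Ed j i ∨ i ≤ j → w j = w' j) →
      H w = H w' := by
    intro w w' hww'
    refine Finset.sum_congr rfl fun u _ => Finset.sum_congr rfl fun v hv => ?_
    rw [Finset.mem_filter, not_lt] at hv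
    by_cases h : u < v ∧ Gc.Adj u v
    · have hu : Ed u i ∨ i ≤ u := by
        by_cases hui : i ≤ u
        · exact Or.inr hui
        · exact Or.inl (hE2 i u v (not_le.mp hui) hv.2 h.2)
      rw [hww' u hu, hww' v (Or.inr hv.2)]
    · rw [hq0 u v h, hq0 u v h]
  rw [hsplit x, hsplit x', hsplit z, hsplit z', hlow x x' hxx', hlow z z' hzz',
    hhigh x z hxz, hhigh x' z' hx'z']
  ring

/-- Contraction comparison lemma. -/
lemma le_of_step {n : ℕ} {St : Type*} [Fintype St] {A : Fin n → Type*}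
    [∀ i, Fintype (A i)] [∀ i, Nonempty (A i)]
    (P : St → (∀ i, A i) → St → ℝ) (r : St → (∀ i, A i) → ℝ) (γ : ℝ)
    (hP0 : ∀ s a s', 0 ≤ P s a s') (hP1 : ∀ s a, ∑ s', P s a s' = 1)
    (hγ0 : 0 ≤ γ) (hγ1 : γ < 1) (V W : St → ℝ)
    (h : ∀ s, ∃ a, V s ≤ QV P r γ V s a ∧ QV P r γ W s a ≤ W s) :
    ∀ s, V s ≤ W s := by
  classical
  rcases isEmpty_or_nonempty St with hSt | hSt
  · intro s; exact (hSt.false s).elim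
  set m := (Finset.univ.image (fun s : St => W s - V s)).min' (by
    simpa using Finset.univ_nonempty.image _) with hm
  have hms : ∀ s, m ≤ W s - V s := by
    intro s
    exact Finset.min'_le _ _ (Finset.mem_image_of_mem _ (Finset.mem_univ s))
  have hmem := Finset.min'_mem (Finset.univ.image (fun s : St => W s - V s)) (by
    simpa using Finset.univ_nonempty.image _)
  rw [Finset.mem_image] at hmem
  obtain ⟨s₀, -, hs₀⟩ := hmem
  obtain ⟨a, ha1, ha2⟩ := h s₀
  have hsum : m ≤ ∑ s', P s₀ a s' * (W s' - V s') := by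
    calc m = ∑ s' : St, P s₀ a s' * m := by rw [← Finset.sum_mul, hP1]; ring
    _ ≤ _ := Finset.sum_le_sum fun s' _ =>
        mul_le_mul_of_nonneg_left (hms s') (hP0 _ _ _)
  have key : γ * m ≤ m := by
    have h2 : ∑ s', P s₀ a s' * (W s' - V s')
        = ∑ s', P s₀ a s' * W s' - ∑ s', P s₀ a s' * V s' := by
      rw [← Finset.sum_sub_distrib]
      exact Finset.sum_congr rfl fun _ _ => by ring
    have h1 : QV P r γ W s₀ a - QV P r γ V s₀ a
        = γ * ∑ s', P s₀ a s' * (W s' - V s') := by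
      simp only [QV]
      rw [h2]
      ring
    have h3 : γ * m ≤ γ * ∑ s', P s₀ a s' * (W s' - V s') :=
      mul_le_mul_of_nonneg_left hsum hγ0
    linarith [hs₀]
  have hm0 : 0 ≤ m := by nlinarith
  intro s
  have := hms s
  linarith
section Improve
variable {n : ℕ} {St : Type*} [Fintype St] {A : Fin n → Type*}
    [∀ i, Fintype (A i)] [∀ i, Nonempty (A i)]
    (P : St → (∀ i, A i) → St → ℝ) (r : St → (∀ i, A i) → ℝ) (γ : ℝ)
    (Ed : Fin n → Fin n → Prop) [DecidableRel Ed]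
    (hEd : ∀ i j : Fin n, Ed j i → j < i)
    (πseq : ℕ → (i : Fin n) → St → ((j : {j : Fin n // Ed j i}) → A j.1) → A i)
    (Vseq : ℕ → St → ℝ)

/-- One sweep of AD-MPI improves the one-step value of the current value function. -/
lemma sweep_improve (hAD : ADMPI P r γ Ed hEd πseq Vseq) (k : ℕ)
    (a₀ : ∀ i, A i) (s : St) :
    Vseq k s ≤ QV P r γ (Vseq k) s (indAct Ed hEd (πseq (k+1)) ∅ a₀ s) := by
  classical
  obtain ⟨hA1, hA2⟩ := hAD
  set σ : ℕ → (i : Fin n) → St → ((j : {j : Fin n // Ed j i}) → A j.1) → A i :=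
    fun m j => if (j : ℕ) < m then πseq (k+1) j else πseq k j with hσ
  have step : ∀ m, m < n →
      QV P r γ (Vseq k) s (indAct Ed hEd (σ m) ∅ a₀ s)
      ≤ QV P r γ (Vseq k) s (indAct Ed hEd (σ (m+1)) ∅ a₀ s) := by
    intro m hm
    set i : Fin n := ⟨m, hm⟩ with hi
    set u : ∀ j, A j := indAct Ed hEd (σ m) ∅ a₀ s with hu
    set u' : ∀ j, A j := indAct Ed hEd (σ (m+1)) ∅ a₀ s with hu'
    set c : (j : {j : Fin n // Ed j i}) → A j.1 := fun j => u j.1 with hc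
    set F : Finset (Fin n) := Finset.univ.filter (fun j => Ed j i ∨ j = i) with hF
    have hσeq : ∀ j : Fin n, (j : ℕ) ≠ m → σ m j = σ (m+1) j := by
      intro j hj
      rw [hσ]
      by_cases h : (j : ℕ) < m
      · simp only [if_pos h, if_pos (Nat.lt_succ_of_lt h)]
      · have h' : ¬ (j : ℕ) < m + 1 := by omega
        simp only [if_neg h, if_neg h']
    have hmixeq : (fun j => if j < i then πseq (k+1) j else πseq k j) = σ m := by
      funext j
      rw [hσ]
      simp only [Fin.lt_def, hi]
    have hlow : ∀ j : Fin n, (j : ℕ) < m → u j = u' j := by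
      intro j hj
      exact indAct_agree Ed hEd (σ m) (σ (m+1)) ∅ ∅ a₀ a₀ s
        (fun j => (j : ℕ) < m)
        (fun j hS _ p hp => by have := hEd j p hp; rw [Fin.lt_def] at this; omega)
        (fun _ _ => Iff.rfl) (fun _ _ h => absurd h (Finset.notMem_empty _))
        (fun j hS _ => hσeq j (by omega)) j hj
    have hmemF : ∀ j : Fin n, j ∈ F ↔ (Ed j i ∨ j = i) := by
      intro j; rw [hF]; simp
    have hiF : i ∈ F := (hmemF i).mpr (Or.inr rfl)
    have hEdival : ∀ j : Fin n, Ed j i → (j : ℕ) < m := by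
      intro j hj
      have := hEd i j hj
      rw [Fin.lt_def] at this
      exact this
    -- the LHS of the improvement inequality is the value of `u`
    have hLHS : ∀ j, indAct Ed hEd (σ m) F (cvec Ed i c (u i)) s j = u j := by
      refine indAct_erase Ed hEd (σ m) F (cvec Ed i c (u i)) a₀ s ?_
      intro j hj
      rcases (hmemF j).mp hj with h | h
      · rw [cvec_parent Ed i c (u i) j h, hc]
      · subst h
        rw [cvec_self Ed hEd, hu]
    -- the RHS is the value of `u'`
    have hui' : u' i = πseq (k+1) i s c := by
      rw [hu', indAct, if_neg (Finset.notMem_empty i)]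
      have hσi : σ (m+1) i = πseq (k+1) i := by
        rw [hσ]; simp [hi]
      rw [hσi]
      congr 1
      funext p
      rw [← hu', ← hlow p.1 (hEdival p.1 p.2), hc]
    have hRHS : ∀ j,
        indAct Ed hEd (σ m) F (cvec Ed i c (πseq (k+1) i s c)) s j = u' j := by
      intro j
      have hswitch : indAct Ed hEd (σ m) F (cvec Ed i c (πseq (k+1) i s c)) s j
          = indAct Ed hEd (σ (m+1)) F (cvec Ed i c (πseq (k+1) i s c)) s j := by
        refine indAct_agree Ed hEd (σ m) (σ (m+1)) F F _ _ s (fun _ => True)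
          (fun _ _ _ _ _ => trivial) (fun _ _ => Iff.rfl) (fun _ _ _ => rfl)
          ?_ j trivial
        intro p _ hp
        refine hσeq p fun hpm => hp ((hmemF p).mpr (Or.inr ?_))
        exact Fin.ext hpm
      rw [hswitch]
      refine indAct_erase Ed hEd (σ (m+1)) F _ a₀ s ?_ j
      intro p hp
      rcases (hmemF p).mp hp with h | h
      · rw [cvec_parent Ed i c _ p h]
        exact hlow p (hEdival p h)
      · subst h
        rw [cvec_self Ed hEd, ← hu', hui']
    have := hA2 k i s c (u i)
    rw [hmixeq] at this
    have e1 : indAct Ed hEd (σ m) F (cvec Ed i c (u i)) s = u := funext hLHS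
    have e2 : indAct Ed hEd (σ m) F (cvec Ed i c (πseq (k+1) i s c)) s = u' :=
      funext hRHS
    rw [hF] at e1 e2
    rw [e1, e2] at this
    exact this
  have chain : ∀ m, m ≤ n →
      Vseq k s ≤ QV P r γ (Vseq k) s (indAct Ed hEd (σ m) ∅ a₀ s) := by
    intro m
    induction m with
    | zero =>
      intro _
      have hσ0 : σ 0 = πseq k := by
        funext j; rw [hσ]; simp
      rw [hσ0]
      exact le_of_eq (hA1 k s a₀)
    | succ m ih =>
      intro hm
      exact le_trans (ih (by omega)) (step m (by omega))
  have hσn : σ n = πseq (k+1) := by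
    funext j; rw [hσ]; simp [j.isLt]
  have := chain n le_rfl
  rw [hσn] at this
  exact this

lemma Vseq_mono (hP0 : ∀ s a s', 0 ≤ P s a s') (hP1 : ∀ s a, ∑ s', P s a s' = 1)
    (hγ0 : 0 ≤ γ) (hγ1 : γ < 1)
    (hAD : ADMPI P r γ Ed hEd πseq Vseq) (k : ℕ) :
    ∀ s, Vseq k s ≤ Vseq (k+1) s := by
  classical
  refine le_of_step P r γ hP0 hP1 hγ0 hγ1 _ _ fun s => ?_
  set a₀ : ∀ i, A i := fun i => Classical.arbitrary _
  exact ⟨indAct Ed hEd (πseq (k+1)) ∅ a₀ s,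
    sweep_improve P r γ Ed hEd πseq Vseq hAD k a₀ s,
    le_of_eq (hAD.1 (k+1) s a₀).symm⟩

end Improve
section Stab
variable {n : ℕ} {St : Type*} [Fintype St] {A : Fin n → Type*}
    [∀ i, Fintype (A i)] [∀ i, Nonempty (A i)]
    (P : St → (∀ i, A i) → St → ℝ) (r : St → (∀ i, A i) → ℝ) (γ : ℝ)
    (Ed : Fin n → Fin n → Prop) [DecidableRel Ed]
    (hEd : ∀ i j : Fin n, Ed j i → j < i)
    (πseq : ℕ → (i : Fin n) → St → ((j : {j : Fin n // Ed j i}) → A j.1) → A i)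
    (Vseq : ℕ → St → ℝ)

lemma Vseq_unique (hP0 : ∀ s a s', 0 ≤ P s a s') (hP1 : ∀ s a, ∑ s', P s a s' = 1)
    (hγ0 : 0 ≤ γ) (hγ1 : γ < 1)
    (hAD : ADMPI P r γ Ed hEd πseq Vseq) (k k' : ℕ)
    (h : πseq k = πseq k') : Vseq k = Vseq k' := by
  classical
  set a₀ : ∀ i, A i := fun i => Classical.arbitrary _ with ha₀
  have h1 : ∀ s, Vseq k s ≤ Vseq k' s := by
    refine le_of_step P r γ hP0 hP1 hγ0 hγ1 _ _ fun s => ?_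
    refine ⟨indAct Ed hEd (πseq k) ∅ a₀ s, le_of_eq (hAD.1 k s a₀), ?_⟩
    rw [h]
    exact le_of_eq (hAD.1 k' s a₀).symm
  have h2 : ∀ s, Vseq k' s ≤ Vseq k s := by
    refine le_of_step P r γ hP0 hP1 hγ0 hγ1 _ _ fun s => ?_
    refine ⟨indAct Ed hEd (πseq k) ∅ a₀ s, ?_, le_of_eq (hAD.1 k s a₀).symm⟩
    rw [h]
    exact le_of_eq (hAD.1 k' s a₀)
  funext s
  exact le_antisymm (h1 s) (h2 s)

lemma Vseq_stab (hP0 : ∀ s a s', 0 ≤ P s a s') (hP1 : ∀ s a, ∑ s', P s a s' = 1)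
    (hγ0 : 0 ≤ γ) (hγ1 : γ < 1)
    (hAD : ADMPI P r γ Ed hEd πseq Vseq) :
    ∃ K, ∀ k, K ≤ k → Vseq k = Vseq K := by
  classical
  have hmono : ∀ k k', k ≤ k' → ∀ s, Vseq k s ≤ Vseq k' s := by
    intro k k' hkk'
    induction k' with
    | zero => intro s; rw [Nat.le_zero.mp hkk']
    | succ k' ih =>
      intro s
      rcases Nat.eq_or_lt_of_le hkk' with h | h
      · rw [h]
      · exact le_trans (ih (by omega) s)
          (Vseq_mono P r γ Ed hEd πseq Vseq hP0 hP1 hγ0 hγ1 hAD k' s)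
  have hfin : (Set.range Vseq).Finite := by
    set g : ((i : Fin n) → St → ((j : {j : Fin n // Ed j i}) → A j.1) → A i) →
        (St → ℝ) :=
      fun p => if h : ∃ m, πseq m = p then Vseq h.choose else Vseq 0 with hg
    have hfact : ∀ k, Vseq k = g (πseq k) := by
      intro k
      have hex : ∃ m, πseq m = πseq k := ⟨k, rfl⟩
      rw [hg]
      simp only [dif_pos hex]
      exact Vseq_unique P r γ Ed hEd πseq Vseq hP0 hP1 hγ0 hγ1 hAD k hex.choose
        hex.choose_spec.symm
    have : Set.range Vseq ⊆ Set.range g := by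
      rintro _ ⟨k, rfl⟩
      exact ⟨πseq k, (hfact k).symm⟩
    exact Set.Finite.subset (Set.finite_range g) this
  set Wsum : ℕ → ℝ := fun k => ∑ s, Vseq k s with hW
  have hWfin : (Set.range Wsum).Finite := by
    have : Set.range Wsum ⊆ (fun V : St → ℝ => ∑ s, V s) '' Set.range Vseq := by
      rintro _ ⟨k, rfl⟩
      exact ⟨Vseq k, ⟨k, rfl⟩, rfl⟩
    exact Set.Finite.subset (hfin.image _) this
  obtain ⟨x, ⟨K, hK⟩, hxmax⟩ :=
    hWfin.exists_maximalFor id _ (Set.range_nonempty Wsum)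
  refine ⟨K, fun k hk => ?_⟩
  have hle : ∀ s ∈ Finset.univ, Vseq K s ≤ Vseq k s :=
    fun s _ => hmono K k hk s
  have hsum : Wsum K = Wsum k := by
    have h1 : Wsum K ≤ Wsum k := Finset.sum_le_sum hle
    have h2 := hxmax ⟨k, rfl⟩ (by simpa [hK] using h1)
    simp only [id, ← hK] at h2; linarith
  have hsum' : ∑ s, Vseq K s = ∑ s, Vseq k s := hsum
  funext s
  exact ((Finset.sum_eq_sum_iff_of_le hle).mp hsum' s (Finset.mem_univ s)).symm

end Stab
section Transfer
variable {n : ℕ} {St : Type*} [Fintype St] {A : Fin n → Type*}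
    [∀ i, Fintype (A i)] [∀ i, Nonempty (A i)]
    (Ed : Fin n → Fin n → Prop) [DecidableRel Ed]
    (hEd : ∀ i j : Fin n, Ed j i → j < i)

/-- Agreement below `i` of clamped rollouts of the same policy. -/
lemma agree_below (μ : (i : Fin n) → St → ((j : {j : Fin n // Ed j i}) → A j.1) → A i)
    (i : Fin n) (c : (j : {j : Fin n // Ed j i}) → A j.1) (b b' : A i) (s : St) :
    ∀ j, j < i →
      indAct Ed hEd μ (Finset.univ.filter fun j => Ed j i ∨ j = i) (cvec Ed i c b) s j
      = indAct Ed hEd μ (Finset.univ.filter fun j => Ed j i ∨ j = i)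
          (cvec Ed i c b') s j := by
  intro j hj
  refine indAct_agree Ed hEd μ μ _ _ _ _ s (fun j => j < i)
    (fun p _ _ m hm => lt_trans (hEd p m hm) (by assumption)) (fun _ _ => Iff.rfl)
    ?_ (fun _ _ _ => rfl) j hj
  intro p hp hpF
  rw [Finset.mem_filter] at hpF
  rcases hpF.2 with h | h
  · rw [cvec_parent Ed i c b p h, cvec_parent Ed i c b' p h]
  · exact absurd h (ne_of_lt hp)

/-- Agreement on `N_d(i) ∪ {≥ i}` of clamped rollouts of policies agreeing above `i`. -/
lemma agree_high (Gc : SimpleGraph (Fin n))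
    (hEdIff : ∀ (i j : Fin n), Ed j i ↔ ((∃ u, i ≤ u ∧ Gc.Adj u j) ∧ ¬ i ≤ j))
    (μ ν : (i : Fin n) → St → ((j : {j : Fin n // Ed j i}) → A j.1) → A i)
    (i : Fin n) (hdown : ∀ j, i < j → μ j = ν j) (v : ∀ j, A j) (s : St) :
    ∀ j, (Ed j i ∨ i ≤ j) →
      indAct Ed hEd μ (Finset.univ.filter fun j => Ed j i ∨ j = i) v s j
      = indAct Ed hEd ν (Finset.univ.filter fun j => Ed j i ∨ j = i) v s j := by
  intro j hj
  refine indAct_agree Ed hEd μ ν _ _ v v s (fun j => Ed j i ∨ i ≤ j)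
    ?_ (fun _ _ => Iff.rfl) (fun _ _ _ => rfl) ?_ j hj
  · intro p hp hpF m hm
    rw [Finset.mem_filter] at hpF
    push_neg at hpF
    have hip : i ≤ p := by
      rcases hp with h | h
      · exact absurd h (hpF (Finset.mem_univ p)).1
      · exact h
    by_cases him : i ≤ m
    · exact Or.inr him
    · left
      obtain ⟨⟨u, hpu, hadj⟩, -⟩ := (hEdIff p m).mp hm
      exact (hEdIff i m).mpr ⟨⟨u, le_trans hip hpu, hadj⟩, him⟩
  · intro p hp hpF
    rw [Finset.mem_filter] at hpF
    push_neg at hpF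
    have := (hpF (Finset.mem_univ p))
    rcases hp with h | h
    · exact absurd h this.1
    · exact hdown p (lt_of_le_of_ne h (Ne.symm this.2))

/-- Transfer of the coordinate objective differences between stages. -/
lemma obj_transfer (Gc : SimpleGraph (Fin n))
    (hEdIff : ∀ (i j : Fin n), Ed j i ↔ ((∃ u, i ≤ u ∧ Gc.Adj u j) ∧ ¬ i ≤ j))
    (QQ : St → (∀ i, A i) → ℝ) (hCG : IsCG Gc QQ)
    (μ ν : (i : Fin n) → St → ((j : {j : Fin n // Ed j i}) → A j.1) → A i)
    (i : Fin n) (hdown : ∀ j, i < j → μ j = ν j)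
    (c : (j : {j : Fin n // Ed j i}) → A j.1) (s : St) (b b' : A i) :
    QQ s (indAct Ed hEd μ (Finset.univ.filter fun j => Ed j i ∨ j = i)
        (cvec Ed i c b) s)
      - QQ s (indAct Ed hEd μ (Finset.univ.filter fun j => Ed j i ∨ j = i)
        (cvec Ed i c b') s)
    = QQ s (indAct Ed hEd ν (Finset.univ.filter fun j => Ed j i ∨ j = i)
        (cvec Ed i c b) s)
      - QQ s (indAct Ed hEd ν (Finset.univ.filter fun j => Ed j i ∨ j = i)
        (cvec Ed i c b') s) := by
  obtain ⟨q, hq0, hq⟩ := hCG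
  have hE2 : ∀ (i u v : Fin n), u < i → i ≤ v → Gc.Adj u v → Ed u i := by
    intro i u v hui hiv hadj
    exact (hEdIff i u).mpr ⟨⟨v, hiv, hadj.symm⟩, not_le.mpr hui⟩
  rw [hq, hq, hq, hq]
  exact DTlem Gc q hq0 Ed (hE2) i s _ _ _ _
    (agree_below Ed hEd μ i c b b' s)
    (agree_below Ed hEd ν i c b b' s)
    (agree_high Ed hEd Gc hEdIff μ ν i hdown _ s)
    (agree_high Ed hEd Gc hEdIff μ ν i hdown _ s)

end Transfer
section PolStab
variable {n : ℕ} {St : Type*} [Fintype St] {A : Fin n → Type*}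
    [∀ i, Fintype (A i)] [∀ i, Nonempty (A i)]
    (P : St → (∀ i, A i) → St → ℝ) (r : St → (∀ i, A i) → ℝ) (γ : ℝ)
    (Gc : SimpleGraph (Fin n))
    (Ed : Fin n → Fin n → Prop) [DecidableRel Ed]
    (hEd : ∀ i j : Fin n, Ed j i → j < i)
    (πseq : ℕ → (i : Fin n) → St → ((j : {j : Fin n // Ed j i}) → A j.1) → A i)
    (Vseq : ℕ → St → ℝ)

/-- The CG hypothesis applies to every `Vseq k`. -/
lemma CG_Vseq
    (hCGall : ∀ (p : St → (∀ i, A i) → ℝ) (V : St → ℝ),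
        (∀ s, (∀ a, 0 ≤ p s a) ∧ ∑ a : ∀ i, A i, p s a = 1) →
        (∀ s, V s = ∑ a : ∀ i, A i, p s a * QV P r γ V s a) →
        IsCG Gc (QV P r γ V))
    (hAD : ADMPI P r γ Ed hEd πseq Vseq) (k : ℕ) :
    IsCG Gc (QV P r γ (Vseq k)) := by
  classical
  set a₀ : ∀ i, A i := fun i => Classical.arbitrary _ with ha₀
  set α : St → ∀ i, A i := fun s => indAct Ed hEd (πseq k) ∅ a₀ s with hα
  refine hCGall (fun s a => if a = α s then 1 else 0) (Vseq k) (fun s => ⟨?_, ?_⟩) ?_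
  · intro a; split <;> norm_num
  · show (∑ a : ∀ i, A i, if a = α s then (1:ℝ) else 0) = 1
    rw [Finset.sum_ite_eq' Finset.univ (α s) (fun _ => (1:ℝ))]
    simp
  · intro s
    show Vseq k s = ∑ a : ∀ i, A i,
      (if a = α s then (1:ℝ) else 0) * QV P r γ (Vseq k) s a
    have h1 : ∀ a : ∀ i, A i,
        (if a = α s then (1:ℝ) else 0) * QV P r γ (Vseq k) s a
        = if a = α s then QV P r γ (Vseq k) s a else 0 := by
      intro a; split <;> ring
    rw [Finset.sum_congr rfl (fun a _ => h1 a),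
      Finset.sum_ite_eq' Finset.univ (α s) (fun a => QV P r γ (Vseq k) s a)]
    simp only [Finset.mem_univ, if_pos]
    exact hAD.1 k s a₀

/-- Once the value functions have stabilized, the policies stabilize. -/
lemma pol_stab (hEdIff : ∀ (i j : Fin n), Ed j i ↔ ((∃ u, i ≤ u ∧ Gc.Adj u j) ∧ ¬ i ≤ j))
    (hCGall : ∀ (p : St → (∀ i, A i) → ℝ) (V : St → ℝ),
        (∀ s, (∀ a, 0 ≤ p s a) ∧ ∑ a : ∀ i, A i, p s a = 1) →
        (∀ s, V s = ∑ a : ∀ i, A i, p s a * QV P r γ V s a) →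
        IsCG Gc (QV P r γ V))
    (hAD : ADMPI P r γ Ed hEd πseq Vseq)
    (hSingle : SingletonArgmax P r γ Ed hEd πseq Vseq)
    (K₀ : ℕ) (hK₀ : ∀ k, K₀ ≤ k → Vseq k = Vseq K₀) :
    ∃ K, ∀ k k', K ≤ k → K ≤ k' → πseq k = πseq k' := by
  classical
  have main : ∀ d : ℕ, ∃ K, (K₀ + 1 ≤ K) ∧ ∀ j : Fin n, n - d ≤ (j : ℕ) →
      ∀ k k', K ≤ k → K ≤ k' → πseq k j = πseq k' j := by
    intro d
    induction d with
    | zero =>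
      exact ⟨K₀ + 1, le_rfl, fun j hj => absurd j.isLt (by omega)⟩
    | succ d ih =>
      obtain ⟨K, hK1, hK⟩ := ih
      by_cases hd : n ≤ d
      · exact ⟨K, hK1, fun j hj k k' hk hk' => hK j (by omega) k k' hk hk'⟩
      · have hm : n - d - 1 < n := by omega
        set i : Fin n := ⟨n - d - 1, hm⟩ with hi
        refine ⟨K + 1, by omega, fun j hj k k' hk hk' => ?_⟩
        by_cases hjo : n - d ≤ (j : ℕ)
        · exact hK j hjo k k' (by omega) (by omega)
        · have hji : j = i := Fin.ext (by simp only [hi]; omega)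
          subst hji
          obtain ⟨a, rfl⟩ : ∃ a, k = a + 1 := ⟨k - 1, by omega⟩
          obtain ⟨b, rfl⟩ : ∃ b, k' = b + 1 := ⟨k' - 1, by omega⟩
          have ha : K ≤ a := by omega
          have hb : K ≤ b := by omega
          have hVab : Vseq a = Vseq b := by
            rw [hK₀ a (by omega), hK₀ b (by omega)]
          funext s c
          -- mixtures at stages a and b
          set μ : (p : Fin n) → St → ((j : {j : Fin n // Ed j p}) → A j.1) → A p :=
            fun p => if p < i then πseq (b+1) p else πseq b p with hμ
          set ν : (p : Fin n) → St → ((j : {j : Fin n // Ed j p}) → A j.1) → A p :=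
            fun p => if p < i then πseq (a+1) p else πseq a p with hν
          have hdown : ∀ p, i < p → μ p = ν p := by
            intro p hp
            rw [hμ, hν]
            simp only [if_neg (asymm hp)]
            exact hK p (by rw [Fin.lt_def] at hp; simp only [hi] at hp; omega) b a hb ha
          have htrans : ∀ bb : A i,
              QV P r γ (Vseq b) s
                (indAct Ed hEd μ (Finset.univ.filter fun p => Ed p i ∨ p = i)
                  (cvec Ed i c bb) s)
              ≤ QV P r γ (Vseq b) s
                (indAct Ed hEd μ (Finset.univ.filter fun p => Ed p i ∨ p = i)
                  (cvec Ed i c (πseq (a+1) i s c)) s) := by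
            intro bb
            have h2 := hAD.2 a i s c bb
            rw [hVab] at h2
            have h3 := obj_transfer Ed hEd Gc hEdIff (QV P r γ (Vseq b))
              (CG_Vseq P r γ Gc Ed hEd πseq Vseq hCGall hAD b) μ ν i hdown c s
              bb (πseq (a+1) i s c)
            linarith [h2, h3]
          have hmax_b : ∀ bb : A i,
              QV P r γ (Vseq b) s
                (indAct Ed hEd (fun p => if p < i then πseq (b+1) p else πseq b p)
                  (Finset.univ.filter fun p => Ed p i ∨ p = i) (cvec Ed i c bb) s)
              ≤ QV P r γ (Vseq b) s
                (indAct Ed hEd (fun p => if p < i then πseq (b+1) p else πseq b p)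
                  (Finset.univ.filter fun p => Ed p i ∨ p = i)
                  (cvec Ed i c (πseq (b+1) i s c)) s) :=
            fun bb => hAD.2 b i s c bb
          exact hSingle b (by omega) i s c (πseq (a+1) i s c) (πseq (b+1) i s c)
            (fun bb => htrans bb) hmax_b
  obtain ⟨K, -, hK⟩ := main n
  exact ⟨K, fun k k' hk hk' => funext fun j => hK j (by omega) k k' hk hk'⟩

end PolStab
section Opt
variable {n : ℕ} {St : Type*} [Fintype St] {A : Fin n → Type*}
    [∀ i, Fintype (A i)] [∀ i, Nonempty (A i)]
    (P : St → (∀ i, A i) → St → ℝ) (r : St → (∀ i, A i) → ℝ) (γ : ℝ)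
    (Gc : SimpleGraph (Fin n))
    (Ed : Fin n → Fin n → Prop) [DecidableRel Ed]
    (hEd : ∀ i j : Fin n, Ed j i → j < i)

/-- A strongly person-by-person optimal action-dependent policy w.r.t. a CG-structured
`Q` induces a globally maximizing joint action. -/
lemma opt_global (hEdIff : ∀ (i j : Fin n), Ed j i ↔ ((∃ u, i ≤ u ∧ Gc.Adj u j) ∧ ¬ i ≤ j))
    (V : St → ℝ) (hCG : IsCG Gc (QV P r γ V))
    (π : (i : Fin n) → St → ((j : {j : Fin n // Ed j i}) → A j.1) → A i)
    (hSFP : ∀ (i : Fin n) (s : St) (c : (j : {j : Fin n // Ed j i}) → A j.1) (ai : A i),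
      QV P r γ V s (indAct Ed hEd π (Finset.univ.filter fun j => Ed j i ∨ j = i)
        (cvec Ed i c ai) s)
      ≤ QV P r γ V s (indAct Ed hEd π (Finset.univ.filter fun j => Ed j i ∨ j = i)
        (cvec Ed i c (π i s c)) s))
    (s : St) (a : ∀ i, A i) :
    QV P r γ V s a ≤ QV P r γ V s (indAct Ed hEd π ∅ a s) := by
  classical
  obtain ⟨q, hq0, hq⟩ := hCG
  have hE2 : ∀ (i u v : Fin n), u < i → i ≤ v → Gc.Adj u v → Ed u i := by
    intro i u v hui hiv hadj
    exact (hEdIff i u).mpr ⟨⟨v, hiv, hadj.symm⟩, not_le.mpr hui⟩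
  set Y : ℕ → ∀ j, A j :=
    fun m => indAct Ed hEd π (Finset.univ.filter fun j => (j : ℕ) < m) a s with hY
  have hstep : ∀ m, m < n → QV P r γ V s (Y (m+1)) ≤ QV P r γ V s (Y m) := by
    intro m hm
    set i : Fin n := ⟨m, hm⟩ with hi
    set c : (j : {j : Fin n // Ed j i}) → A j.1 := fun j => a j.1 with hc
    set F : Finset (Fin n) := Finset.univ.filter (fun j => Ed j i ∨ j = i) with hF
    have hmemF : ∀ j : Fin n, j ∈ F ↔ (Ed j i ∨ j = i) := fun j => by rw [hF]; simp
    have hEdlt : ∀ j : Fin n, Ed j i → (j : ℕ) < m := by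
      intro j hj
      have := hEd i j hj
      rwa [Fin.lt_def] at this
    set W : ∀ j, A j := indAct Ed hEd π F (cvec Ed i c (a i)) s with hW
    set W' : ∀ j, A j := indAct Ed hEd π F (cvec Ed i c (π i s c)) s with hW'
    have hclose : ∀ (F₁ : Finset (Fin n)), (∀ p : Fin n, Ed p i → p ∈ F₁) →
        ∀ p, (Ed p i ∨ i ≤ p) → p ∉ F₁ → ∀ m', Ed m' p → (Ed m' i ∨ i ≤ m') := by
      intro F₁ hcont p hp hpF m' hm'
      have hip : i ≤ p := hp.resolve_left (fun h => hpF (hcont p h))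
      by_cases him : i ≤ m'
      · exact Or.inr him
      · left
        obtain ⟨⟨u, hpu, hadj⟩, -⟩ := (hEdIff p m').mp hm'
        exact (hEdIff i m').mpr ⟨⟨u, le_trans hip hpu, hadj⟩, him⟩
    have hclampY : ∀ (M : ℕ) (j : Fin n), (j : ℕ) < M → Y M j = a j := by
      intro M j hj
      rw [hY]
      simp only
      rw [indAct, if_pos (Finset.mem_filter.mpr ⟨Finset.mem_univ j, hj⟩)]
    have hival : (i : ℕ) = m := rfl
    have hxx' : ∀ j, j < i → Y (m+1) j = Y m j := by
      intro j hj
      rw [Fin.lt_def, hival] at hj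
      rw [hclampY (m+1) j (by omega), hclampY m j hj]
    have hzz' : ∀ j, j < i → W j = W' j :=
      fun j hj => agree_below Ed hEd π i c (a i) (π i s c) s j hj
    have hxz : ∀ j, (Ed j i ∨ i ≤ j) → Y (m+1) j = W j := by
      intro j hj
      rw [hY, hW]
      simp only
      refine indAct_agree Ed hEd π π (Finset.univ.filter fun p => (p : ℕ) < m+1) F a
        (cvec Ed i c (a i)) s (fun p => Ed p i ∨ i ≤ p)
        (hclose _ (fun p hp => Finset.mem_filter.mpr
          ⟨Finset.mem_univ p, by have := hEdlt p hp; omega⟩)) ?_ ?_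
        (fun _ _ _ => rfl) j hj
      · intro p hp
        constructor
        · intro h1
          have hval : (p : ℕ) < m + 1 := (Finset.mem_filter.mp h1).2
          refine (hmemF p).mpr ?_
          by_cases hpm : (p : ℕ) = m
          · exact Or.inr (Fin.ext hpm)
          · refine Or.inl (hp.resolve_right fun h => ?_)
            rw [Fin.le_def, hival] at h
            omega
        · intro h1
          rcases (hmemF p).mp h1 with h | h
          · exact Finset.mem_filter.mpr ⟨Finset.mem_univ p,
              by have := hEdlt p h; omega⟩
          · exact Finset.mem_filter.mpr ⟨Finset.mem_univ p, by rw [h, hival]; omega⟩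
      · intro p hp hpF1
        have hval : (p : ℕ) < m + 1 := (Finset.mem_filter.mp hpF1).2
        have hpF2 : Ed p i ∨ p = i := by
          by_cases hpm : (p : ℕ) = m
          · exact Or.inr (Fin.ext hpm)
          · refine Or.inl (hp.resolve_right fun h => ?_)
            rw [Fin.le_def, hival] at h
            omega
        rcases hpF2 with h | h
        · rw [cvec_parent Ed i c (a i) p h, hc]
        · subst h
          rw [cvec_self Ed hEd]
    -- y_m agrees with W' on the high set
    have hinotF1m : i ∉ Finset.univ.filter (fun p : Fin n => (p : ℕ) < m) := by
      simp [hi]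
    have hYmparents : (fun p : {p : Fin n // Ed p i} =>
        indAct Ed hEd π (Finset.univ.filter fun p : Fin n => (p : ℕ) < m) a s p.1)
        = c := by
      funext p
      have hpmem : p.1 ∈ Finset.univ.filter (fun p : Fin n => (p : ℕ) < m) :=
        Finset.mem_filter.mpr ⟨Finset.mem_univ _, hEdlt p.1 p.2⟩
      rw [indAct, if_pos hpmem, hc]
    have hYmi : Y m i = π i s c := by
      rw [hY]
      simp only
      rw [indAct, if_neg hinotF1m, hYmparents]
    have hins := indAct_insert Ed hEd π
      (Finset.univ.filter fun p : Fin n => (p : ℕ) < m) a s i hinotF1m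
    have hx'z' : ∀ j, (Ed j i ∨ i ≤ j) → Y m j = W' j := by
      intro j hj
      rw [hY, hW']
      simp only
      rw [show indAct Ed hEd π (Finset.univ.filter fun p : Fin n => (p : ℕ) < m) a s j
        = indAct Ed hEd π
            (insert i (Finset.univ.filter fun p : Fin n => (p : ℕ) < m))
            (Function.update a i
              (indAct Ed hEd π (Finset.univ.filter fun p : Fin n => (p : ℕ) < m) a s i))
            s j from (hins j).symm]
      refine indAct_agree Ed hEd π π _ F _ (cvec Ed i c (π i s c)) s
        (fun p => Ed p i ∨ i ≤ p)
        (hclose _ (fun p hp => Finset.mem_insert_of_mem (Finset.mem_filter.mpr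
          ⟨Finset.mem_univ p, hEdlt p hp⟩))) ?_ ?_ (fun _ _ _ => rfl) j hj
      · intro p hp
        constructor
        · intro h1
          refine (hmemF p).mpr ?_
          rcases Finset.mem_insert.mp h1 with h | h
          · exact Or.inr h
          · have hval : (p : ℕ) < m := (Finset.mem_filter.mp h).2
            refine Or.inl (hp.resolve_right fun hle => ?_)
            rw [Fin.le_def, hival] at hle
            omega
        · intro h1
          rcases (hmemF p).mp h1 with h | h
          · exact Finset.mem_insert_of_mem
              (Finset.mem_filter.mpr ⟨Finset.mem_univ p, hEdlt p h⟩)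
          · rw [h]; exact Finset.mem_insert_self _ _
      · intro p hp hpF1
        rcases Finset.mem_insert.mp hpF1 with h | h
        · subst h
          rw [Function.update_self, cvec_self Ed hEd, ← hYmi, hY]
        · have hpi : p ≠ i := by
            rintro rfl
            exact absurd h hinotF1m
          have hEdpi : Ed p i := by
            refine hp.resolve_right fun hle => ?_
            have hval : (p : ℕ) < m := (Finset.mem_filter.mp h).2
            rw [Fin.le_def, hival] at hle
            omega
          rw [Function.update_of_ne hpi, cvec_parent Ed i c _ p hEdpi, hc]
    have hDT := DTlem Gc q hq0 Ed hE2 i s (Y (m+1)) (Y m) W W' hxx' hzz' hxz hx'z'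
    have hsfp := hSFP i s c (a i)
    rw [← hF, ← hW, ← hW'] at hsfp
    have e1 := hq s (Y (m+1))
    have e2 := hq s (Y m)
    have e3 := hq s W
    have e4 := hq s W'
    linarith
  have hchain : ∀ m, m ≤ n → QV P r γ V s (Y m) ≤ QV P r γ V s (Y 0) := by
    intro m
    induction m with
    | zero => intro _; exact le_rfl
    | succ m ih => intro hm; exact le_trans (hstep m (by omega)) (ih (by omega))
  have hYn : Y n = a := by
    funext j
    rw [hY]
    simp only
    rw [indAct, if_pos (Finset.mem_filter.mpr ⟨Finset.mem_univ j, j.isLt⟩)]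
  have hY0 : Y 0 = indAct Ed hEd π ∅ a s := by
    rw [hY]
    simp only
    congr 1
    ext j
    simp
  have := hchain n le_rfl
  rw [hYn, hY0] at this
  exact this

end Opt
/-- convergence theorem: suppose `G_c` is a CG of `Q^{V^π}` for every
(stochastic) joint policy `π` of the finite Markov game, and the singleton-argmax
assumption holds. Let `(πseq, Vseq)` be an execution of Algorithm AD-MPI associated
with an ADG (edge relation `Ed`). If `N_d(i) = N_c(i^{[+]})` for every `i`, then the
policy sequence converges in finitely many terms to a globally optimal policy `π°`,
i.e. `V^{π°} = V^*` (encoded as: `V^*` is the fixed point of `T_{π°}`). -/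
theorem stmt14 {n : ℕ} {St : Type*} [Fintype St] {A : Fin n → Type*}
    [∀ i, Fintype (A i)] [∀ i, Nonempty (A i)]
    (P : St → (∀ i, A i) → St → ℝ) (r : St → (∀ i, A i) → ℝ) (γ : ℝ)
    (hP0 : ∀ s a s', 0 ≤ P s a s') (hP1 : ∀ s a, ∑ s', P s a s' = 1)
    (hγ0 : 0 ≤ γ) (hγ1 : γ < 1)
    (Gc : SimpleGraph (Fin n))
    (hCGall : ∀ (p : St → (∀ i, A i) → ℝ) (V : St → ℝ),
        (∀ s, (∀ a, 0 ≤ p s a) ∧ ∑ a : ∀ i, A i, p s a = 1) →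
        (∀ s, V s = ∑ a : ∀ i, A i, p s a * QV P r γ V s a) →
        IsCG Gc (QV P r γ V))
    (Ed : Fin n → Fin n → Prop) [DecidableRel Ed]
    (hEd : ∀ i j : Fin n, Ed j i → j < i)
    (πseq : ℕ → (i : Fin n) → St → ((j : {j : Fin n // Ed j i}) → A j.1) → A i)
    (Vseq : ℕ → St → ℝ)
    (hADMPI : ADMPI P r γ Ed hEd πseq Vseq)
    (hSingle : SingletonArgmax P r γ Ed hEd πseq Vseq)
    (hNd : ∀ k : Fin n, {j : Fin n | Ed j k} = ncSet Gc {j : Fin n | k ≤ j})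
    (Vstar : St → ℝ)
    (hVstar : ∀ s, Vstar s = ⨆ a : ∀ i, A i, QV P r γ Vstar s a) :
    ∃ (K : ℕ)
      (πcirc : (i : Fin n) → St → ((j : {j : Fin n // Ed j i}) → A j.1) → A i),
      (∀ k ≥ K, ∀ i : Fin n, πseq k i = πcirc i) ∧
      (∀ (s : St) (a' : ∀ i, A i),
        Vstar s = QV P r γ Vstar s (indAct Ed hEd πcirc ∅ a' s)) := by
  classical
  have hEdIff : ∀ (i j : Fin n), Ed j i ↔ ((∃ u, i ≤ u ∧ Gc.Adj u j) ∧ ¬ i ≤ j) := by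
    intro i j
    have := Set.ext_iff.mp (hNd i) j
    simpa [ncSet, SimpleGraph.mem_neighborSet] using this
  obtain ⟨K₀, hK₀⟩ := Vseq_stab P r γ Ed hEd πseq Vseq hP0 hP1 hγ0 hγ1 hADMPI
  obtain ⟨K₁, hK₁⟩ := pol_stab P r γ Gc Ed hEd πseq Vseq hEdIff hCGall hADMPI
    hSingle K₀ hK₀
  have hπk : ∀ k, K₁ ≤ k → πseq k = πseq K₁ := fun k hk => hK₁ k K₁ hk le_rfl
  set a₀ : ∀ i, A i := fun i => Classical.arbitrary _ with ha₀
  have hSFP : ∀ (i : Fin n) (s : St) (c : (j : {j : Fin n // Ed j i}) → A j.1)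
      (ai : A i),
      QV P r γ (Vseq K₁) s (indAct Ed hEd (πseq K₁)
        (Finset.univ.filter fun j => Ed j i ∨ j = i) (cvec Ed i c ai) s)
      ≤ QV P r γ (Vseq K₁) s (indAct Ed hEd (πseq K₁)
        (Finset.univ.filter fun j => Ed j i ∨ j = i)
        (cvec Ed i c (πseq K₁ i s c)) s) := by
    intro i s c ai
    have h2 := hADMPI.2 K₁ i s c ai
    rw [hπk (K₁+1) (Nat.le_succ _)] at h2
    simp only [ite_self] at h2
    exact h2
  have hCG := CG_Vseq P r γ Gc Ed hEd πseq Vseq hCGall hADMPI K₁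
  have hglob : ∀ s a, QV P r γ (Vseq K₁) s a
      ≤ QV P r γ (Vseq K₁) s (indAct Ed hEd (πseq K₁) ∅ a s) :=
    opt_global P r γ Gc Ed hEd hEdIff (Vseq K₁) hCG (πseq K₁) hSFP
  have hfix : ∀ (s : St) (a' : ∀ i, A i),
      Vseq K₁ s = QV P r γ (Vseq K₁) s (indAct Ed hEd (πseq K₁) ∅ a' s) :=
    hADMPI.1 K₁
  have hopt : ∀ s a, QV P r γ (Vseq K₁) s a ≤ Vseq K₁ s :=
    fun s a => (hglob s a).trans (le_of_eq (hfix s a).symm)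
  have bdd : ∀ (W : St → ℝ) (s : St), BddAbove (Set.range (QV P r γ W s)) :=
    fun W s => (Set.finite_range _).bddAbove
  have h1 : ∀ s, Vseq K₁ s ≤ Vstar s := by
    refine le_of_step P r γ hP0 hP1 hγ0 hγ1 _ _ fun s => ?_
    refine ⟨indAct Ed hEd (πseq K₁) ∅ a₀ s, le_of_eq (hfix s a₀), ?_⟩
    rw [hVstar s]
    exact le_ciSup (bdd Vstar s) _
  have h2 : ∀ s, Vstar s ≤ Vseq K₁ s := by
    refine le_of_step P r γ hP0 hP1 hγ0 hγ1 _ _ fun s => ?_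
    obtain ⟨astar, hastar⟩ := Finite.exists_max (fun a => QV P r γ Vstar s a)
    refine ⟨astar, ?_, hopt s astar⟩
    rw [hVstar s]
    exact ciSup_le hastar
  have hVeq : Vstar = Vseq K₁ := funext fun s => le_antisymm (h2 s) (h1 s)
  refine ⟨K₁, πseq K₁, fun k hk i => congrFun (hπk k hk) i, fun s a' => ?_⟩
  rw [hVeq]
  exact hfix s a'
end

section
/- Let Q : S × A → ℝ be an arbitrary function, and let G_d be the fully dense ADG with edge set E_d = {(i,j) ∈ N × N : i < j}, so that N_d(i) = {1,…,i−1} for every i. If a stochastic action-dependent joint policy π associated with G_d is G_d-locally optimal with respect to Q, then E_π[Q(s, a)] = max_{a ∈ A} Q(s, a) for every s ∈ S. -/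
/-- Combine clamped values `a'` (on the coordinates in `F`) with free values `b`
(on the coordinates outside `F`) into a full joint action. -/
def comb {n : ℕ} {A : Fin n → Type*} (F : Finset (Fin n)) (a' : ∀ i, A i)
    (b : (j : {j : Fin n // j ∉ F}) → A j.1) : ∀ i, A i :=
  fun m => if h : m ∉ F then b ⟨m, h⟩ else a' m

/-- The clamped expectation `E_{π_{-F}}[f(s, a'_F, a_{-F})]`: the coordinates in `F`
are clamped to the values of `a'`, and the agents outside `F` draw their actions from
their (action-dependent) policies, each `π j` conditioning on the actions of its
in-neighbors `N_d(j) = {k | Ed k j}` in the combined action vector. -/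
def clampedExp {n : ℕ} {St : Type*} {A : Fin n → Type*} [∀ i, Fintype (A i)]
    (Ed : Fin n → Fin n → Prop) [DecidableRel Ed]
    (π : (i : Fin n) → St → ((j : {j : Fin n // Ed j i}) → A j.1) → A i → ℝ)
    (F : Finset (Fin n)) (s : St) (a' : ∀ i, A i)
    (f : (∀ i, A i) → ℝ) : ℝ :=
  ∑ b : (j : {j : Fin n // j ∉ F}) → A j.1,
    (∏ j : {j : Fin n // j ∉ F},
        π j.1 s (fun k => comb F a' b k.1) (b j)) * f (comb F a' b)

/-- `π` is a (stochastic action-dependent) joint policy: each conditional `π i s c`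
is a probability distribution on `A i`. -/
def IsPolicy {n : ℕ} {St : Type*} {A : Fin n → Type*} [∀ i, Fintype (A i)]
    (Ed : Fin n → Fin n → Prop)
    (π : (i : Fin n) → St → ((j : {j : Fin n // Ed j i}) → A j.1) → A i → ℝ) : Prop :=
  ∀ (i : Fin n) (s : St) (c : (j : {j : Fin n // Ed j i}) → A j.1),
    (∀ ai, 0 ≤ π i s c ai) ∧ ∑ ai, π i s c ai = 1

/-- `π` is `G_d`-locally optimal with respect to `Q`: for every agent `i`, state `s`,
and clamped values `a'` on `N_d(i)`,
`E_{π_{-N_d(i)}}[Q(s, a'_{N_d(i)}, a_{-N_d(i)})]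
  = max_{a_i} E_{π_{-N_d[i]}}[Q(s, a'_{N_d(i)}, a_i, a_{-N_d[i]})]`. -/
def GdLocallyOpt {n : ℕ} {St : Type*} {A : Fin n → Type*}
    [∀ i, Fintype (A i)] [∀ i, Nonempty (A i)]
    (Ed : Fin n → Fin n → Prop) [DecidableRel Ed]
    (π : (i : Fin n) → St → ((j : {j : Fin n // Ed j i}) → A j.1) → A i → ℝ)
    (Q : St → (∀ i, A i) → ℝ) : Prop :=
  ∀ (i : Fin n) (s : St) (a' : ∀ j, A j),
    clampedExp Ed π (Finset.univ.filter fun j => Ed j i) s a' (Q s)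
      = ⨆ ai : A i, clampedExp Ed π (Finset.univ.filter fun j => Ed j i ∨ j = i) s
          (Function.update a' i ai) (Q s)

section Aux

private lemma sup_flatten {X Y : Type*} [Fintype X] [Fintype Y] [Nonempty X] [Nonempty Y]
    (F : X → Y → ℝ) (G : Y → ℝ)
    (h1 : ∀ a b, ∃ b', F a b = G b')
    (h2 : ∀ b, ∃ a b', G b = F a b') :
    (⨆ a, ⨆ b, F a b) = ⨆ b, G b := by
  apply le_antisymm
  · refine ciSup_le fun a => ciSup_le fun b => ?_
    obtain ⟨b', hb⟩ := h1 a b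
    rw [hb]
    exact le_ciSup (Set.Finite.bddAbove (Set.finite_range G)) b'
  · refine ciSup_le fun b => ?_
    obtain ⟨a, b', hb⟩ := h2 b
    rw [hb]
    exact le_trans (le_ciSup (Set.Finite.bddAbove (Set.finite_range (F a))) b')
      (le_ciSup (f := fun a => ⨆ b, F a b) (Set.Finite.bddAbove (Set.finite_range _)) a)

private lemma clampedExp_univ {n : ℕ} {St : Type*} {A : Fin n → Type*} [∀ i, Fintype (A i)]
    (Ed : Fin n → Fin n → Prop) [DecidableRel Ed]
    (π : (i : Fin n) → St → ((j : {j : Fin n // Ed j i}) → A j.1) → A i → ℝ)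
    (s : St) (a' : ∀ i, A i) (f : (∀ i, A i) → ℝ) :
    clampedExp Ed π Finset.univ s a' f = f a' := by
  haveI hE : IsEmpty {j : Fin n // j ∉ (Finset.univ : Finset (Fin n))} :=
    ⟨fun j => j.2 (Finset.mem_univ j.1)⟩
  have hcomb : ∀ b, comb (Finset.univ : Finset (Fin n)) a' b = a' := by
    intro b; funext m; simp [comb]
  unfold clampedExp
  rw [Fintype.sum_unique]
  simp [hcomb]

private lemma key {n : ℕ} {St : Type*} {A : Fin n → Type*}
    [∀ i, Fintype (A i)] [∀ i, Nonempty (A i)]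
    (Q : St → (∀ i, A i) → ℝ)
    (π : (i : Fin n) → St → ((j : {j : Fin n // (fun a b : Fin n => a < b) j i}) → A j.1) → A i → ℝ)
    (hopt : GdLocallyOpt (fun a b : Fin n => a < b) π Q)
    (d : ℕ) : ∀ (k : ℕ), k + d = n → ∀ (s : St) (a' : ∀ j, A j),
      clampedExp (fun a b : Fin n => a < b) π
        (Finset.univ.filter fun j : Fin n => j.1 < k) s a' (Q s)
        = ⨆ b : ∀ j, A j, Q s (fun m => if m.1 < k then a' m else b m) := by
  induction d with
  | zero =>
    intro k hk s a'
    have hkn : k = n := by omega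
    have hfil : (Finset.univ.filter fun j : Fin n => j.1 < k) = Finset.univ := by
      ext j; have := j.isLt; simp; omega
    rw [hfil, clampedExp_univ]
    have hfun : ∀ b : ∀ j, A j, (fun m : Fin n => if m.1 < k then a' m else b m) = a' := by
      intro b; funext m; have := m.isLt; rw [if_pos (by omega)]
    simp only [hfun]
    exact ciSup_const.symm
  | succ d ih =>
    intro k hk s a'
    have hkn : k < n := by omega
    set i : Fin n := ⟨k, hkn⟩ with hi
    have h1 : (Finset.univ.filter fun j : Fin n => j < i)
        = Finset.univ.filter fun j : Fin n => j.1 < k := by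
      ext j; simp only [Finset.mem_filter, Finset.mem_univ, true_and, Fin.lt_def]; rfl
    have h2 : (Finset.univ.filter fun j : Fin n => j < i ∨ j = i)
        = Finset.univ.filter fun j : Fin n => j.1 < k + 1 := by
      ext j; simp only [Finset.mem_filter, Finset.mem_univ, true_and, Fin.lt_def, Fin.ext_iff]
      have hik : (i : ℕ) = k := rfl
      omega
    have hloc := hopt i s a'
    rw [h1, h2] at hloc
    rw [hloc]
    have hrec : ∀ ai : A i,
        clampedExp (fun a b : Fin n => a < b) π
          (Finset.univ.filter fun j : Fin n => j.1 < k + 1) s (Function.update a' i ai) (Q s)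
          = ⨆ b : ∀ j, A j, Q s (fun m => if m.1 < k + 1 then Function.update a' i ai m else b m) :=
      fun ai => ih (k + 1) (by omega) s (Function.update a' i ai)
    rw [iSup_congr hrec]
    apply sup_flatten
    · intro ai b
      refine ⟨Function.update b i ai, ?_⟩
      congr 1
      funext m
      by_cases hm : m = i
      · subst hm
        simp
        have hik : (i : ℕ) = k := rfl; simp [hik]
      · have hne : m.1 ≠ k := fun h => hm (Fin.ext h)
        rw [Function.update_of_ne hm, Function.update_of_ne hm]
        split_ifs <;> first | rfl | omega
    · intro b
      refine ⟨b i, b, ?_⟩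
      congr 1
      funext m
      by_cases hm : m = i
      · subst hm
        simp
        have hik : (i : ℕ) = k := rfl; simp [hik]
      · have hne : m.1 ≠ k := fun h => hm (Fin.ext h)
        rw [Function.update_of_ne hm]
        split_ifs <;> first | rfl | omega

end Aux

/-- for the fully dense ADG, whose edge relation is
`Ed j i ↔ j < i` (so `N_d(i) = {1,…,i−1}`), any `G_d`-locally optimal stochastic
action-dependent joint policy `π` satisfies `E_π[Q(s,a)] = max_a Q(s,a)` for every
state `s` and any function `Q`. -/
theorem stmt15 {n : ℕ} {St : Type*} {A : Fin n → Type*}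
    [∀ i, Fintype (A i)] [∀ i, Nonempty (A i)]
    (Q : St → (∀ i, A i) → ℝ)
    (π : (i : Fin n) → St → ((j : {j : Fin n // (fun a b : Fin n => a < b) j i}) → A j.1) → A i → ℝ)
    (hπ : IsPolicy (fun a b : Fin n => a < b) π)
    (hopt : GdLocallyOpt (fun a b : Fin n => a < b) π Q) :
    ∀ (s : St) (a' : ∀ j, A j),
      clampedExp (fun a b : Fin n => a < b) π ∅ s a' (Q s)
        = ⨆ a : ∀ j, A j, Q s a := by
  
  intro s a'
  have h0 : (∅ : Finset (Fin n)) = Finset.univ.filter fun j : Fin n => j.1 < 0 := by simp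
  rw [h0, key Q π hopt n 0 (by omega) s a']
  simp
end
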